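/- arXiv:math/0509327 — 6 statements merged into one kernel-verified Lean document; each statement's English description precedes it below -/
import Mathlib

section
/- Let H be a Hilbert space and M, N closed subspaces. The Friedrichs angle satisfies c(M, N) = c(M⊥, N⊥), where c(M,N) = sup{|⟨x,y⟩| : x ∈ M ⊖ (M∩N), y ∈ N ⊖ (M∩N), ‖x‖=‖y‖=1}. -/
set_option linter.unusedSectionVars false
set_option maxHeartbeats 1000000

open ContinuousLinearMap Submodule

noncomputable def friedrichsAngle {H : Type*} [NormedAddCommGroup H] [InnerProductSpace ℂ H]
    (M N : Submodule ℂ H) : ℝ :=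
  sSup {r : ℝ | ∃ x ∈ M ⊓ (M ⊓ N)ᗮ, ∃ y ∈ N ⊓ (M ⊓ N)ᗮ,
    ‖x‖ = 1 ∧ ‖y‖ = 1 ∧ r = ‖(inner ℂ x y : ℂ)‖}

variable {H : Type*} [NormedAddCommGroup H] [InnerProductSpace ℂ H] [CompleteSpace H]

local notation "⟪" x ", " y "⟫" => @inner ℂ _ _ x y

namespace FriedrichsAux


noncomputable def pj (U : Submodule ℂ H) [HasOrthogonalProjection U] : H →L[ℂ] H :=
  U.subtypeL ∘L orthogonalProjection U

variable (U : Submodule ℂ H) [HasOrthogonalProjection U]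

lemma pj_apply (x : H) : pj U x = (orthogonalProjection U x : H) := rfl

lemma pj_mem (x : H) : pj U x ∈ U := (orthogonalProjection U x).2

lemma pj_inner (x y : H) : ⟪pj U x, y⟫ = ⟪x, pj U y⟫ :=
  Submodule.inner_starProjection_left_eq_right (K := U) x y

lemma pj_of_mem {x : H} (hx : x ∈ U) : pj U x = x :=
  Submodule.starProjection_eq_self_iff (K := U) |>.2 hx

lemma pj_of_orth {x : H} (hx : x ∈ Uᗮ) : pj U x = 0 := by
  simp [pj_apply, orthogonalProjection_mem_subspace_orthogonalComplement_eq_zero hx]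

lemma sub_pj_mem (x : H) : x - pj U x ∈ Uᗮ :=
  Submodule.sub_starProjection_mem_orthogonal (K := U) x

lemma inner_pj_self (x : H) : ⟪pj U x, x⟫ = ((‖pj U x‖ : ℂ) ^ 2) := by
  have h0 : ⟪pj U x, x - pj U x⟫ = 0 :=
    inner_right_of_mem_orthogonal (pj_mem U x) (sub_pj_mem U x)
  have h1 : pj U (pj U x) = pj U x := pj_of_mem U (pj_mem U x)
  have h2 : ⟪pj U x, pj U x⟫ = ⟪x, pj U x⟫ := by rw [pj_inner, h1]
  rw [pj_inner, ← h2, inner_self_eq_norm_sq_to_K]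
  norm_cast

lemma norm_pj_sq (x : H) : ‖x‖ ^ 2 = ‖pj U x‖ ^ 2 + ‖x - pj U x‖ ^ 2 := by
  have h0 : ⟪pj U x, x - pj U x⟫ = 0 :=
    inner_right_of_mem_orthogonal (pj_mem U x) (sub_pj_mem U x)
  have e : pj U x + (x - pj U x) = x := by abel
  have := norm_add_sq_eq_norm_sq_add_norm_sq_of_inner_eq_zero (pj U x) (x - pj U x) h0
  rw [e] at this
  simp only [pow_two]
  exact this

lemma norm_pj_le (x : H) : ‖pj U x‖ ≤ ‖x‖ := by
  have := norm_pj_sq U x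
  nlinarith [norm_nonneg (pj U x), norm_nonneg x, sq_nonneg (‖x - pj U x‖)]

lemma norm_sub_pj_sq (x : H) : ‖x - pj U x‖ ^ 2 = ‖x‖ ^ 2 - ‖pj U x‖ ^ 2 := by
  have := norm_pj_sq U x; linarith


def fASet (M N : Submodule ℂ H) : Set ℝ :=
  {r : ℝ | ∃ x ∈ M ⊓ (M ⊓ N)ᗮ, ∃ y ∈ N ⊓ (M ⊓ N)ᗮ,
    ‖x‖ = 1 ∧ ‖y‖ = 1 ∧ r = ‖(inner ℂ x y : ℂ)‖}

lemma fA_eq (M N : Submodule ℂ H) : friedrichsAngle M N = sSup (fASet M N) := rfl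

lemma fASet_bdd (M N : Submodule ℂ H) : BddAbove (fASet M N) := by
  refine ⟨1, fun r hr => ?_⟩
  obtain ⟨x, hx, y, hy, hx1, hy1, rfl⟩ := hr
  calc ‖⟪x, y⟫‖ ≤ ‖x‖ * ‖y‖ := norm_inner_le_norm x y
  _ = 1 := by rw [hx1, hy1, mul_one]

lemma fA_nonneg (M N : Submodule ℂ H) : 0 ≤ friedrichsAngle M N := by
  apply Real.sSup_nonneg
  rintro r ⟨x, hx, y, hy, hx1, hy1, rfl⟩
  exact norm_nonneg _

lemma fA_le_one (M N : Submodule ℂ H) : friedrichsAngle M N ≤ 1 := by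
  apply Real.sSup_le _ zero_le_one
  rintro r ⟨x, hx, y, hy, hx1, hy1, rfl⟩
  calc ‖⟪x, y⟫‖ ≤ ‖x‖ * ‖y‖ := norm_inner_le_norm x y
  _ = 1 := by rw [hx1, hy1, mul_one]

lemma inner_le_fA (M N : Submodule ℂ H) {u v : H} (hu : u ∈ M ⊓ (M ⊓ N)ᗮ)
    (hv : v ∈ N ⊓ (M ⊓ N)ᗮ) : ‖⟪u, v⟫‖ ≤ friedrichsAngle M N * (‖u‖ * ‖v‖) := by
  rcases eq_or_ne u 0 with rfl | hu0
  · simp [inner_zero_left]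
  rcases eq_or_ne v 0 with rfl | hv0
  · simp [inner_zero_right]
  have hun : ‖u‖ ≠ 0 := norm_ne_zero_iff.2 hu0
  have hvn : ‖v‖ ≠ 0 := norm_ne_zero_iff.2 hv0
  set u' : H := (‖u‖⁻¹ : ℂ) • u with hu'
  set v' : H := (‖v‖⁻¹ : ℂ) • v with hv'
  have hu'm : u' ∈ M ⊓ (M ⊓ N)ᗮ := Submodule.smul_mem _ _ hu
  have hv'm : v' ∈ N ⊓ (M ⊓ N)ᗮ := Submodule.smul_mem _ _ hv
  have hu'1 : ‖u'‖ = 1 := by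
    rw [hu', norm_smul]; simp [hun]
  have hv'1 : ‖v'‖ = 1 := by
    rw [hv', norm_smul]; simp [hvn]
  have hmem : ‖⟪u', v'⟫‖ ∈ fASet M N := ⟨u', hu'm, v', hv'm, hu'1, hv'1, rfl⟩
  have hle : ‖⟪u', v'⟫‖ ≤ friedrichsAngle M N := le_csSup (fASet_bdd M N) hmem
  have hinner : ‖⟪u', v'⟫‖ = ‖u‖⁻¹ * (‖v‖⁻¹ * ‖⟪u, v⟫‖) := by
    rw [hu', hv', inner_smul_left, inner_smul_right]
    simp [norm_mul]
  rw [hinner] at hle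

  have h1 : 0 < ‖u‖ := lt_of_le_of_ne (norm_nonneg u) (Ne.symm hun)
  have h2 : 0 < ‖v‖ := lt_of_le_of_ne (norm_nonneg v) (Ne.symm hvn)
  calc ‖⟪u, v⟫‖ = (‖u‖⁻¹ * (‖v‖⁻¹ * ‖⟪u, v⟫‖)) * (‖u‖ * ‖v‖) := by
        field_simp
  _ ≤ friedrichsAngle M N * (‖u‖ * ‖v‖) := by
        apply mul_le_mul_of_nonneg_right hle (by positivity)

lemma fA_comm (M N : Submodule ℂ H) : friedrichsAngle M N = friedrichsAngle N M := by
  rw [fA_eq, fA_eq]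
  congr 1
  ext r
  constructor
  · rintro ⟨x, hx, y, hy, hx1, hy1, rfl⟩
    exact ⟨y, by rwa [inf_comm N M] , x, by rwa [inf_comm N M], hy1, hx1,
      (norm_inner_symm x y : _)⟩
  · rintro ⟨x, hx, y, hy, hx1, hy1, rfl⟩
    exact ⟨y, by rwa [inf_comm M N], x, by rwa [inf_comm M N], hy1, hx1,
      (norm_inner_symm x y : _)⟩


lemma le_orth_of_forall {K : Submodule ℂ H} {a : H} (h : ∀ t ∈ K, ⟪a, t⟫ = 0) : a ∈ Kᗮ := by
  intro t ht
  rw [inner_eq_zero_symm]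
  exact h t ht

lemma key_ineq (U V : Submodule ℂ H) [HasOrthogonalProjection U] [HasOrthogonalProjection V]
    {z : H} (hzU : z ∈ U) :
    ‖pj V z‖ ^ 2 - ‖pj U (pj V z)‖ ^ 2 ≤
      (friedrichsAngle Uᗮ Vᗮ) ^ 2 * (‖z‖ ^ 2 - ‖pj V z‖ ^ 2) := by
  set c := friedrichsAngle Uᗮ Vᗮ with hc
  set a : H := z - pj V z with hadef
  set b : H := pj V z - pj U (pj V z) with hbdef
  have ha1 : a ∈ Vᗮ := sub_pj_mem V z
  have hb1 : b ∈ Uᗮ := sub_pj_mem U (pj V z)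
  have ha2 : a ∈ (Uᗮ ⊓ Vᗮ)ᗮ := by
    apply le_orth_of_forall
    intro t ht
    have h1 : ⟪z, t⟫ = 0 := inner_right_of_mem_orthogonal hzU ht.1
    have h2 : ⟪pj V z, t⟫ = 0 := by
      rw [pj_inner, pj_of_orth V ht.2, inner_zero_right]
    rw [hadef, inner_sub_left, h1, h2, sub_zero]
  have hb2 : b ∈ (Uᗮ ⊓ Vᗮ)ᗮ := by
    apply le_orth_of_forall
    intro t ht
    have h1 : ⟪pj V z, t⟫ = 0 := by
      rw [pj_inner, pj_of_orth V ht.2, inner_zero_right]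
    have h2 : ⟪pj U (pj V z), t⟫ = 0 := by
      rw [pj_inner, pj_of_orth U ht.1, inner_zero_right]
    rw [hbdef, inner_sub_left, h1, h2, sub_zero]
  have hγβ : ‖pj U (pj V z)‖ ≤ ‖pj V z‖ := norm_pj_le U (pj V z)
  have hinner : ⟪b, a⟫ = ((‖pj U (pj V z)‖ ^ 2 - ‖pj V z‖ ^ 2 : ℝ) : ℂ) := by
    have e1 : ⟪pj V z, z⟫ = ((‖pj V z‖ ^ 2 : ℝ) : ℂ) := by
      rw [inner_pj_self]; norm_cast
    have e2 : ⟪pj V z, pj V z⟫ = ((‖pj V z‖ ^ 2 : ℝ) : ℂ) := by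
      rw [inner_self_eq_norm_sq_to_K]; norm_cast
    have e3 : ⟪pj U (pj V z), z⟫ = ((‖pj V z‖ ^ 2 : ℝ) : ℂ) := by
      rw [pj_inner, pj_of_mem U hzU, e1]
    have e4 : ⟪pj U (pj V z), pj V z⟫ = ((‖pj U (pj V z)‖ ^ 2 : ℝ) : ℂ) := by
      rw [inner_pj_self]; norm_cast
    rw [hbdef, hadef, inner_sub_left, inner_sub_right, inner_sub_right, e1, e2, e3, e4]
    push_cast
    ring
  have hnormab : ‖⟪b, a⟫‖ = ‖pj V z‖ ^ 2 - ‖pj U (pj V z)‖ ^ 2 := by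
    rw [hinner, Complex.norm_real, Real.norm_eq_abs, abs_sub_comm, abs_of_nonneg]
    nlinarith [norm_nonneg (pj U (pj V z)), norm_nonneg (pj V z)]
  have hna : ‖a‖ ^ 2 = ‖z‖ ^ 2 - ‖pj V z‖ ^ 2 := norm_sub_pj_sq V z
  have hnb : ‖b‖ ^ 2 = ‖pj V z‖ ^ 2 - ‖pj U (pj V z)‖ ^ 2 := norm_sub_pj_sq U (pj V z)
  have hfa : ‖⟪b, a⟫‖ ≤ c * (‖b‖ * ‖a‖) :=
    inner_le_fA Uᗮ Vᗮ ⟨hb1, hb2⟩ ⟨ha1, ha2⟩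
  rw [hnormab] at hfa
  have hcnn : 0 ≤ c := fA_nonneg _ _
  nlinarith [sq_nonneg (c * ‖a‖ - ‖b‖), norm_nonneg a, norm_nonneg b,
    mul_nonneg hcnn (norm_nonneg a)]

lemma pj_mem_orth_of_le {K V : Submodule ℂ H} [HasOrthogonalProjection V] (hKV : K ≤ V)
    {z : H} (hz : z ∈ Kᗮ) : pj V z ∈ Kᗮ := by
  apply le_orth_of_forall
  intro t ht
  rw [pj_inner, pj_of_mem V (hKV ht)]
  rw [inner_eq_zero_symm]
  exact hz t ht

lemma pj_inf_orth_eq {M K : Submodule ℂ H} [HasOrthogonalProjection M]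
    [HasOrthogonalProjection (M ⊓ Kᗮ)] (hKM : K ≤ M) {u : H} (hu : u ∈ Kᗮ) :
    pj (M ⊓ Kᗮ) u = pj M u := by
  have h1 : pj M u ∈ M ⊓ Kᗮ := ⟨pj_mem M u, pj_mem_orth_of_le hKM hu⟩
  have h2 : u - pj M u ∈ (M ⊓ Kᗮ)ᗮ :=
    Submodule.orthogonal_le inf_le_left (sub_pj_mem M u)
  exact Submodule.eq_starProjection_of_mem_orthogonal h1 h2

lemma inner_self_re (u : H) : (⟪u, u⟫).re = ‖u‖ ^ 2 := by
  have : ⟪u, u⟫ = ((‖u‖ ^ 2 : ℝ) : ℂ) := by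
    rw [inner_self_eq_norm_sq_to_K]; norm_cast
  rw [this, Complex.ofReal_re]

lemma quad_bound (T : H →L[ℂ] H) (hsym : ∀ u v : H, ⟪T u, v⟫ = ⟪u, T v⟫)
    (hpos : ∀ y : H, 0 ≤ (⟪T y, y⟫).re) (hbd : ∀ y : H, ‖T y‖ ≤ 2 * ‖y‖) (x : H) :
    ‖T x‖ ^ 2 ≤ 2 * (⟪T x, x⟫).re := by
  set α := (⟪T x, x⟫).re with hα
  set γ := (⟪T (T x), T x⟫).re with hγ
  have hα0 : 0 ≤ α := hpos x
  have hγ0 : 0 ≤ γ := hpos (T x)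
  have hγ2 : γ ≤ 2 * ‖T x‖ ^ 2 := by
    calc γ ≤ ‖⟪T (T x), T x⟫‖ := Complex.re_le_norm _
    _ = ‖⟪T (T x), T x⟫‖ := rfl
    _ ≤ ‖T (T x)‖ * ‖T x‖ := norm_inner_le_norm _ _
    _ ≤ (2 * ‖T x‖) * ‖T x‖ := by
        apply mul_le_mul_of_nonneg_right (hbd (T x)) (norm_nonneg _)
    _ = 2 * ‖T x‖ ^ 2 := by ring
  have hTTx : (⟪T (T x), x⟫).re = ‖T x‖ ^ 2 := by
    rw [hsym (T x) x, inner_self_re]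
  have key : ∀ t : ℝ, 0 ≤ γ * (t * t) + (2 * ‖T x‖ ^ 2) * t + α := by
    intro t
    have expand : ⟪T (x + (t : ℂ) • T x), x + (t : ℂ) • T x⟫ =
        ⟪T x, x⟫ + (t : ℂ) * ⟪T x, T x⟫ + (t : ℂ) * ⟪T (T x), x⟫ +
          (t : ℂ) * ((t : ℂ) * ⟪T (T x), T x⟫) := by
      rw [map_add, map_smul, inner_add_left, inner_add_right, inner_add_right,
        inner_smul_left, inner_smul_right, inner_smul_left, inner_smul_right]
      rw [Complex.conj_ofReal]
      ring
    have := hpos (x + (t : ℂ) • T x)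
    rw [expand] at this
    simp only [Complex.add_re, Complex.re_ofReal_mul] at this
    rw [inner_self_re, hTTx] at this
    calc (0:ℝ) ≤ α + t * ‖T x‖ ^ 2 + t * ‖T x‖ ^ 2 + t * (t * γ) := this
    _ = γ * (t * t) + (2 * ‖T x‖ ^ 2) * t + α := by ring
  have hdisc : discrim γ (2 * ‖T x‖ ^ 2) α ≤ 0 := discrim_le_zero key
  rw [discrim] at hdisc
  nlinarith [sq_nonneg (‖T x‖), hα0, hγ0, hγ2, hdisc,
    mul_nonneg hα0 (sq_nonneg (‖T x‖))]

lemma main_bound (M N : Submodule ℂ H) (hM : IsClosed (M : Set H)) (hN : IsClosed (N : Set H))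
    (hc : friedrichsAngle Mᗮ Nᗮ < 1) {z : H} (hzM : z ∈ M) (hzo : z ∈ (M ⊓ N)ᗮ)
    (hz1 : ‖z‖ = 1) :
    haveI : CompleteSpace N := hN.completeSpace_coe
    ‖pj N z‖ ^ 2 ≤ friedrichsAngle Mᗮ Nᗮ ^ 2 := by
  haveI hCM : CompleteSpace M := hM.completeSpace_coe
  haveI hCN : CompleteSpace N := hN.completeSpace_coe
  haveI hCM' : CompleteSpace ↥(M ⊓ (M ⊓ N)ᗮ) := by
    have : IsClosed ((M ⊓ (M ⊓ N)ᗮ : Submodule ℂ H) : Set H) := by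
      rw [Submodule.coe_inf]
      exact hM.inter (Submodule.isClosed_orthogonal _)
    exact this.completeSpace_coe
  by_contra hcon
  push_neg at hcon
  set c := friedrichsAngle Mᗮ Nᗮ with hcdef
  have hc0 : 0 ≤ c := fA_nonneg _ _
  have hr1 : c ^ 2 < 1 := by nlinarith
  -- the alternating sequence
  set w : ℕ → H := fun k => Nat.rec z (fun k ih => if Even k then pj N ih else pj M ih) k
    with hwdef
  have hw0 : w 0 = z := rfl
  have hwsucc : ∀ k, w (k + 1) = if Even k then pj N (w k) else pj M (w k) := fun k => rfl
  have hmem : ∀ k, w k ∈ (M ⊓ N)ᗮ ∧ (Even k → w k ∈ M) ∧ (¬Even k → w k ∈ N) := by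
    intro k
    induction k with
    | zero => exact ⟨hzo, fun _ => hzM, fun h => absurd Even.zero h⟩
    | succ k ih =>
      rw [hwsucc]
      by_cases hk : Even k
      · simp only [hk, if_true]
        refine ⟨pj_mem_orth_of_le inf_le_right ih.1, ?_, fun _ => pj_mem N _⟩
        intro hE
        exact absurd (Nat.even_add_one.1 hE) (not_not_intro hk)
      · simp only [hk, if_false]
        refine ⟨pj_mem_orth_of_le inf_le_left ih.1, fun _ => pj_mem M _, ?_⟩
        intro hO
        exact absurd (Nat.even_add_one.2 hk) hO
  have hwdec : ∀ k, ‖w (k + 1)‖ ≤ ‖w k‖ := by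
    intro k
    rw [hwsucc]
    split_ifs
    · exact norm_pj_le N _
    · exact norm_pj_le M _
  have hd0 : ∀ k, 0 ≤ ‖w k‖ ^ 2 - ‖w (k + 1)‖ ^ 2 := by
    intro k
    have := hwdec k
    nlinarith [norm_nonneg (w k), norm_nonneg (w (k+1))]
  have hdrop : ∀ k, ‖w (k + 1)‖ ^ 2 - ‖w (k + 2)‖ ^ 2 ≤ c ^ 2 * (‖w k‖ ^ 2 - ‖w (k + 1)‖ ^ 2) := by
    intro k
    by_cases hk : Even k
    · have h1 : w (k + 1) = pj N (w k) := by rw [hwsucc]; simp [hk]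
      have h2 : w (k + 2) = pj M (w (k + 1)) := by
        rw [show k + 2 = (k + 1) + 1 from rfl, hwsucc (k + 1)]
        simp [Nat.even_add_one, hk]
      rw [h1, h2, h1]
      exact key_ineq M N ((hmem k).2.1 hk)
    · have h1 : w (k + 1) = pj M (w k) := by rw [hwsucc]; simp [hk]
      have h2 : w (k + 2) = pj N (w (k + 1)) := by
        rw [show k + 2 = (k + 1) + 1 from rfl, hwsucc (k + 1)]
        simp [Nat.even_add_one, hk]
      rw [h1, h2, h1]
      have := key_ineq N M ((hmem k).2.2 hk)
      rwa [← fA_comm Mᗮ Nᗮ] at this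
  have hgeo : ∀ k, ‖w k‖ ^ 2 - ‖w (k + 1)‖ ^ 2 ≤ (c ^ 2) ^ k * (‖w 0‖ ^ 2 - ‖w 1‖ ^ 2) := by
    intro k
    induction k with
    | zero => simp
    | succ k ih =>
      calc ‖w (k + 1)‖ ^ 2 - ‖w (k + 2)‖ ^ 2 ≤ c ^ 2 * (‖w k‖ ^ 2 - ‖w (k + 1)‖ ^ 2) :=
            hdrop k
      _ ≤ c ^ 2 * ((c ^ 2) ^ k * (‖w 0‖ ^ 2 - ‖w 1‖ ^ 2)) := by
            apply mul_le_mul_of_nonneg_left ih (sq_nonneg c)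
      _ = (c ^ 2) ^ (k + 1) * (‖w 0‖ ^ 2 - ‖w 1‖ ^ 2) := by ring
  set β2 : ℝ := ‖pj N z‖ ^ 2 with hβ2
  have hw1 : w 1 = pj N z := by simpa [hw0] using hwsucc 0
  set δ : ℝ := 1 - (1 - β2) / (1 - c ^ 2) with hδ
  have hδpos : 0 < δ := by
    have hβc : c ^ 2 < β2 := hcon
    have hβ1 : β2 ≤ 1 := by
      have := norm_pj_le N z
      rw [hβ2]
      nlinarith [norm_nonneg (pj N z), hz1]
    rw [hδ, sub_pos, div_lt_one (by linarith : (0:ℝ) < 1 - c ^ 2)]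
    linarith
  have hlowW : ∀ K, δ ≤ ‖w K‖ ^ 2 := by
    intro K
    have htel : ∑ i ∈ Finset.range K, (‖w i‖ ^ 2 - ‖w (i + 1)‖ ^ 2)
        = ‖w 0‖ ^ 2 - ‖w K‖ ^ 2 := Finset.sum_range_sub' (fun i => ‖w i‖ ^ 2) K
    have hsum : ∑ i ∈ Finset.range K, (‖w i‖ ^ 2 - ‖w (i + 1)‖ ^ 2)
        ≤ (1 - β2) / (1 - c ^ 2) := by
      have h1 : ∑ i ∈ Finset.range K, (‖w i‖ ^ 2 - ‖w (i + 1)‖ ^ 2)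
          ≤ ∑ i ∈ Finset.range K, (c ^ 2) ^ i * (1 - β2) := by
        apply Finset.sum_le_sum
        intro i _
        have := hgeo i
        rw [hw0, hw1, hz1] at this
        simpa using this
      have h2 : ∑ i ∈ Finset.range K, (c ^ 2) ^ i * (1 - β2)
          = (∑ i ∈ Finset.range K, (c ^ 2) ^ i) * (1 - β2) := by
        rw [Finset.sum_mul]
      have h3 : (∑ i ∈ Finset.range K, (c ^ 2) ^ i) * (1 - c ^ 2) = 1 - (c ^ 2) ^ K := by
        have := geom_sum_mul (c ^ 2) K
        linarith [this]
      have h4 : (∑ i ∈ Finset.range K, (c ^ 2) ^ i) ≤ 1 / (1 - c ^ 2) := by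
        rw [le_div_iff₀ (by linarith : (0:ℝ) < 1 - c ^ 2)]
        have : (0:ℝ) ≤ (c ^ 2) ^ K := by positivity
        linarith
      have hβ1 : 0 ≤ 1 - β2 := by
        have := norm_pj_le N z
        rw [hβ2]
        nlinarith [norm_nonneg (pj N z), hz1]
      calc ∑ i ∈ Finset.range K, (‖w i‖ ^ 2 - ‖w (i + 1)‖ ^ 2)
          ≤ (∑ i ∈ Finset.range K, (c ^ 2) ^ i) * (1 - β2) := by rw [← h2]; exact h1
      _ ≤ (1 / (1 - c ^ 2)) * (1 - β2) := by
          apply mul_le_mul_of_nonneg_right h4 hβ1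
      _ = (1 - β2) / (1 - c ^ 2) := by ring
    rw [htel, hw0, hz1] at hsum
    rw [hδ]
    have : (1:ℝ) ^ 2 = 1 := one_pow 2
    linarith [hsum]
  -- the operator S = P ∘ B ∘ P
  set P : H →L[ℂ] H := pj (M ⊓ (M ⊓ N)ᗮ) with hPdef
  set S : H →L[ℂ] H := P ∘L ((pj N) ∘L P) with hSdef
  have hSapp : ∀ u : H, S u = P (pj N (P u)) := fun u => rfl
  have hwS : ∀ k, w (2 * k) = (S ^ k) z := by
    intro k
    induction k with
    | zero => simpa [hw0] using rfl
    | succ k ih =>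
      have hw2k : w (2 * k) ∈ M ⊓ (M ⊓ N)ᗮ :=
        ⟨(hmem (2 * k)).2.1 (even_two_mul k), (hmem (2 * k)).1⟩
      have e1 : P (w (2 * k)) = w (2 * k) := pj_of_mem _ hw2k
      have e2 : pj N (w (2 * k)) = w (2 * k + 1) := by
        rw [hwsucc (2 * k)]
        simp [even_two_mul k]
      have e3 : P (w (2 * k + 1)) = pj M (w (2 * k + 1)) :=
        pj_inf_orth_eq inf_le_left ((hmem (2 * k + 1)).1)
      have e4 : pj M (w (2 * k + 1)) = w (2 * k + 2) := by
        rw [hwsucc (2 * k + 1)]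
        simp [Nat.even_add_one, even_two_mul k]
      have : (S ^ (k + 1)) z = S ((S ^ k) z) := by
        rw [pow_succ', ContinuousLinearMap.mul_apply]
      rw [show 2 * (k + 1) = 2 * k + 2 from by ring, this, ← ih, hSapp, e1, e2, e3, e4]
  -- symmetry and contraction properties
  have hS_sym : ∀ u v : H, ⟪S u, v⟫ = ⟪u, S v⟫ := by
    intro u v
    rw [hSapp u, hSapp v]
    calc ⟪P ((pj N) (P u)), v⟫ = ⟪(pj N) (P u), P v⟫ := pj_inner _ _ _
    _ = ⟪P u, (pj N) (P v)⟫ := pj_inner _ _ _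
    _ = ⟪u, P ((pj N) (P v))⟫ := pj_inner _ _ _
  have hpow_sym : ∀ (i : ℕ) (u v : H), ⟪(S ^ i) u, v⟫ = ⟪u, (S ^ i) v⟫ := by
    intro i
    induction i with
    | zero => intro u v; simp
    | succ i ih =>
      intro u v
      have e : ∀ x : H, (S ^ (i + 1)) x = S ((S ^ i) x) := by
        intro x; rw [pow_succ', ContinuousLinearMap.mul_apply]
      rw [e, e, hS_sym, ih, ← ContinuousLinearMap.mul_apply, ← pow_succ,
        ← ContinuousLinearMap.mul_apply S, ← pow_succ']
  have hS_le : ∀ u : H, ‖S u‖ ≤ ‖u‖ := by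
    intro u
    rw [hSapp]
    calc ‖P (pj N (P u))‖ ≤ ‖pj N (P u)‖ := norm_pj_le _ _
    _ ≤ ‖P u‖ := norm_pj_le _ _
    _ ≤ ‖u‖ := norm_pj_le _ _
  have hpow_le : ∀ (i : ℕ) (u : H), ‖(S ^ i) u‖ ≤ ‖u‖ := by
    intro i
    induction i with
    | zero => intro u; simp
    | succ i ih =>
      intro u
      have e : (S ^ (i + 1)) u = S ((S ^ i) u) := by
        rw [pow_succ', ContinuousLinearMap.mul_apply]
      rw [e]
      exact (hS_le _).trans (ih u)
  -- moments
  have haev : ∀ (i : ℕ) (y : H), ⟪(S ^ (2 * i)) y, y⟫ = ((‖(S ^ i) y‖ ^ 2 : ℝ) : ℂ) := by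
    intro i y
    have e : (S ^ (2 * i)) y = (S ^ i) ((S ^ i) y) := by
      rw [show 2 * i = i + i from by ring, pow_add, ContinuousLinearMap.mul_apply]
    rw [e, hpow_sym i, inner_self_eq_norm_sq_to_K]
    norm_cast
  have hSquad : ∀ u : H, ⟪S u, u⟫ = ((‖pj N (P u)‖ ^ 2 : ℝ) : ℂ) := by
    intro u
    rw [hSapp, pj_inner, inner_pj_self]
    norm_cast
  have haodd : ∀ (i : ℕ) (y : H),
      ⟪(S ^ (2 * i + 1)) y, y⟫ = ((‖pj N (P ((S ^ i) y))‖ ^ 2 : ℝ) : ℂ) := by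
    intro i y
    have e : (S ^ (2 * i + 1)) y = (S ^ i) (S ((S ^ i) y)) := by
      rw [show 2 * i + 1 = i + (1 + i) from by ring, pow_add, pow_add]
      simp [ContinuousLinearMap.mul_apply]
    rw [e, hpow_sym i, hSquad]
  have hmono : ∀ (y : H) (j : ℕ), (⟪(S ^ (j + 1)) y, y⟫).re ≤ (⟪(S ^ j) y, y⟫).re := by
    intro y j
    rcases Nat.even_or_odd j with ⟨i, hi⟩ | ⟨i, hi⟩
    · subst hi
      rw [show i + i = 2 * i from by ring, show 2 * i + 1 = 2 * i + 1 from rfl]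
      rw [haev i y, haodd i y, Complex.ofReal_re, Complex.ofReal_re]
      have h1 : ‖pj N (P ((S ^ i) y))‖ ≤ ‖(S ^ i) y‖ :=
        (norm_pj_le _ _).trans (norm_pj_le _ _)
      exact pow_le_pow_left₀ (norm_nonneg _) h1 2
    · subst hi
      rw [show 2 * i + 1 + 1 = 2 * (i + 1) from by ring]
      rw [haev (i + 1) y, haodd i y, Complex.ofReal_re, Complex.ofReal_re]
      have e : (S ^ (i + 1)) y = S ((S ^ i) y) := by
        rw [pow_succ', ContinuousLinearMap.mul_apply]
      rw [e, hSapp]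
      exact pow_le_pow_left₀ (norm_nonneg _) (norm_pj_le _ _) 2
  have hposm : ∀ (y : H) (j : ℕ), 0 ≤ (⟪(S ^ j) y, y⟫).re := by
    intro y j
    rcases Nat.even_or_odd j with ⟨i, hi⟩ | ⟨i, hi⟩
    · subst hi
      rw [show i + i = 2 * i from by ring, haev i y, Complex.ofReal_re]
      positivity
    · subst hi
      rw [haodd i y, Complex.ofReal_re]
      positivity
  have hant : ∀ y : H, Antitone (fun j => (⟪(S ^ j) y, y⟫).re) := fun y =>
    antitone_nat_of_succ_le (hmono y)
  -- Cauchy estimate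
  have hquad : ∀ k m : ℕ, k ≤ m →
      ‖(S ^ k) z - (S ^ m) z‖ ^ 2 ≤ 2 * ((⟪(S ^ k) z, z⟫).re - (⟪(S ^ m) z, z⟫).re) := by
    intro k m hkm
    set T : H →L[ℂ] H := S ^ k - S ^ m with hTdef
    have hTapp : ∀ u : H, T u = (S ^ k) u - (S ^ m) u := fun u => rfl
    have hTsym : ∀ u v : H, ⟪T u, v⟫ = ⟪u, T v⟫ := by
      intro u v
      rw [hTapp, hTapp, inner_sub_left, inner_sub_right, hpow_sym, hpow_sym]
    have hTpos : ∀ y : H, 0 ≤ (⟪T y, y⟫).re := by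
      intro y
      rw [hTapp, inner_sub_left, Complex.sub_re, sub_nonneg]
      exact hant y hkm
    have hTbd : ∀ y : H, ‖T y‖ ≤ 2 * ‖y‖ := by
      intro y
      rw [hTapp]
      calc ‖(S ^ k) y - (S ^ m) y‖ ≤ ‖(S ^ k) y‖ + ‖(S ^ m) y‖ := norm_sub_le _ _
      _ ≤ ‖y‖ + ‖y‖ := add_le_add (hpow_le k y) (hpow_le m y)
      _ = 2 * ‖y‖ := by ring
    have := quad_bound T hTsym hTpos hTbd z
    rw [hTapp, inner_sub_left, Complex.sub_re] at this
    exact this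
  have haconv : CauchySeq (fun j => (⟪(S ^ j) z, z⟫).re) := by
    have hbdd : BddBelow (Set.range (fun j => (⟪(S ^ j) z, z⟫).re)) := by
      refine ⟨0, ?_⟩
      rintro r ⟨j, rfl⟩
      exact hposm z j
    exact (tendsto_atTop_ciInf (hant z) hbdd).cauchySeq
  have hcs : CauchySeq (fun k => (S ^ k) z) := by
    rw [Metric.cauchySeq_iff]
    intro ε hε
    obtain ⟨Nn, hNn⟩ := Metric.cauchySeq_iff.1 haconv (ε ^ 2 / 2) (by positivity)
    refine ⟨Nn, fun m hm k hk => ?_⟩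
    have key : ∀ k' m' : ℕ, Nn ≤ k' → Nn ≤ m' → k' ≤ m' →
        dist ((S ^ m') z) ((S ^ k') z) < ε := by
      intro k' m' hk' hm' hkm'
      have h1 := hquad k' m' hkm'
      have h2 := hNn k' hk' m' hm'
      rw [Real.dist_eq] at h2
      have h3 : (⟪(S ^ k') z, z⟫).re - (⟪(S ^ m') z, z⟫).re < ε ^ 2 / 2 :=
        lt_of_le_of_lt (le_abs_self _) h2
      have h4 : ‖(S ^ k') z - (S ^ m') z‖ ^ 2 < ε ^ 2 := by linarith
      have h5 : ‖(S ^ m') z - (S ^ k') z‖ ^ 2 < ε ^ 2 := by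
        rw [norm_sub_rev] at h4; exact h4
      rw [dist_eq_norm]
      exact lt_of_pow_lt_pow_left₀ 2 (le_of_lt hε) h5
    rcases le_total m k with hmk | hkm
    · rw [dist_comm]
      exact key m k hm hk hmk
    · exact key k m hk hm hkm
  obtain ⟨v, hv⟩ := cauchySeq_tendsto_of_complete hcs
  -- the limit v is a fixed point of S
  have hv1 : Filter.Tendsto (fun k => (S ^ (k + 1)) z) Filter.atTop (nhds v) :=
    (Filter.tendsto_add_atTop_iff_nat 1).2 hv
  have hv2 : Filter.Tendsto (fun k => S ((S ^ k) z)) Filter.atTop (nhds (S v)) :=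
    (S.continuous.tendsto v).comp hv
  have hfix : S v = v := by
    have he : (fun k => S ((S ^ k) z)) = fun k => (S ^ (k + 1)) z := by
      funext k
      rw [pow_succ', ContinuousLinearMap.mul_apply]
    rw [he] at hv2
    exact tendsto_nhds_unique hv2 hv1
  -- v is not zero
  have hvlow : δ ≤ ‖v‖ * ‖v‖ := by
    have hn : Filter.Tendsto (fun k => ‖(S ^ k) z‖ * ‖(S ^ k) z‖) Filter.atTop
        (nhds (‖v‖ * ‖v‖)) := hv.norm.mul hv.norm
    apply ge_of_tendsto hn
    filter_upwards with k
    have := hlowW (2 * k)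
    rw [hwS k] at this
    nlinarith [this]
  have hvne : v ≠ 0 := by
    intro h
    rw [h, norm_zero] at hvlow
    linarith
  -- chain of norm equalities
  have hchain1 : ‖v‖ ≤ ‖pj N (P v)‖ := by
    conv_lhs => rw [← hfix, hSapp]
    exact norm_pj_le _ _
  have hchain2 : ‖pj N (P v)‖ ≤ ‖P v‖ := norm_pj_le _ _
  have hchain3 : ‖P v‖ ≤ ‖v‖ := norm_pj_le _ _
  have hPv : P v = v := by
    have h1 : ‖P v‖ = ‖v‖ := le_antisymm hchain3 (hchain1.trans hchain2)
    have h2 : ‖v - P v‖ ^ 2 = ‖v‖ ^ 2 - ‖P v‖ ^ 2 := norm_sub_pj_sq _ v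
    rw [h1, sub_self] at h2
    have h3 : v - P v = 0 := by
      rw [← norm_eq_zero]
      nlinarith [norm_nonneg (v - P v)]
    rw [sub_eq_zero] at h3
    exact h3.symm
  have hNv : pj N v = v := by
    have h1 : ‖pj N v‖ = ‖v‖ := by
      have e : pj N (P v) = pj N v := by rw [hPv]
      refine le_antisymm (norm_pj_le _ _) ?_
      rw [← e]
      exact hchain1
    have h2 : ‖v - pj N v‖ ^ 2 = ‖v‖ ^ 2 - ‖pj N v‖ ^ 2 := norm_sub_pj_sq _ v
    rw [h1, sub_self] at h2
    have h3 : v - pj N v = 0 := by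
      rw [← norm_eq_zero]
      nlinarith [norm_nonneg (v - pj N v)]
    rw [sub_eq_zero] at h3
    exact h3.symm
  have hvM' : v ∈ M ⊓ (M ⊓ N)ᗮ := hPv ▸ pj_mem _ v
  have hvN : v ∈ N := hNv ▸ pj_mem N v
  have hvK : v ∈ M ⊓ N := ⟨hvM'.1, hvN⟩
  have : ⟪v, v⟫ = 0 := by
    rw [inner_eq_zero_symm]
    exact hvM'.2 v hvK
  exact hvne (inner_self_eq_zero.1 this)

lemma fA_le_orth (M N : Submodule ℂ H) (hM : IsClosed (M : Set H))
    (hN : IsClosed (N : Set H)) : friedrichsAngle M N ≤ friedrichsAngle Mᗮ Nᗮ := by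
  rcases le_or_gt 1 (friedrichsAngle Mᗮ Nᗮ) with h1 | h1
  · exact (fA_le_one M N).trans h1
  · haveI : CompleteSpace N := hN.completeSpace_coe
    rw [fA_eq]
    apply Real.sSup_le _ (fA_nonneg Mᗮ Nᗮ)
    rintro r ⟨x, hx, y, hy, hx1, hy1, rfl⟩
    have h2 : ‖(inner ℂ x y : ℂ)‖ ≤ ‖pj N x‖ := by
      have hxy : (inner ℂ x y : ℂ) = ⟪pj N x, y⟫ := by
        rw [pj_inner, pj_of_mem N hy.1]
      rw [hxy]
      calc ‖⟪pj N x, y⟫‖ ≤ ‖pj N x‖ * ‖y‖ := norm_inner_le_norm _ _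
      _ = ‖pj N x‖ := by rw [hy1, mul_one]
    have h3 : ‖pj N x‖ ^ 2 ≤ friedrichsAngle Mᗮ Nᗮ ^ 2 :=
      main_bound M N hM hN h1 hx.1 hx.2 hx1
    have h4 : ‖pj N x‖ ≤ friedrichsAngle Mᗮ Nᗮ := by
      nlinarith [norm_nonneg (pj N x), fA_nonneg Mᗮ Nᗮ]
    exact h2.trans h4

end FriedrichsAux

theorem friedrichsAngle_orthogonal (M N : Submodule ℂ H)
    (hM : IsClosed (M : Set H)) (hN : IsClosed (N : Set H)) :
    friedrichsAngle M N = friedrichsAngle Mᗮ Nᗮ := by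
  haveI : CompleteSpace M := hM.completeSpace_coe
  haveI : CompleteSpace N := hN.completeSpace_coe
  refine le_antisymm (FriedrichsAux.fA_le_orth M N hM hN) ?_
  have h2 := FriedrichsAux.fA_le_orth Mᗮ Nᗮ (Submodule.isClosed_orthogonal M)
    (Submodule.isClosed_orthogonal N)
  rwa [Submodule.orthogonal_orthogonal M, Submodule.orthogonal_orthogonal N] at h2
end

section
/- Let H be a Hilbert space and M, N closed subspaces. The Friedrichs angle cosine c(M, N) < 1 if and only if M + N is a closed subspace of H. -/
open ContinuousLinearMap Submodule

variable {H : Type*} [NormedAddCommGroup H] [InnerProductSpace ℂ H] [CompleteSpace H]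

open RCLike in
theorem aux_est {A B : Submodule ℂ H} {c : ℝ} (hc0 : 0 ≤ c) (hc1 : c ≤ 1)
    (h : ∀ a ∈ A, ∀ b ∈ B, ‖(inner ℂ a b : ℂ)‖ ≤ c * (‖a‖ * ‖b‖)) :
    ∀ a ∈ A, ∀ b ∈ B, (1 - c) * ‖a‖ ^ 2 ≤ ‖a + b‖ ^ 2 := by
  intro a ha b hb
  have h1 : ‖a + b‖ ^ 2 = ‖a‖ ^ 2 + 2 * re (inner ℂ a b : ℂ) + ‖b‖ ^ 2 := norm_add_sq a b
  have h2 : |re (inner ℂ a b : ℂ)| ≤ ‖(inner ℂ a b : ℂ)‖ := abs_re_le_norm _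
  have h3 := h a ha b hb
  have h4 : -(c * (‖a‖ * ‖b‖)) ≤ re (inner ℂ a b : ℂ) := by
    have := abs_le.mp (h2.trans h3)
    linarith [this.1]
  nlinarith [mul_nonneg hc0 (sq_nonneg (‖a‖ - ‖b‖)), mul_nonneg (sub_nonneg.mpr hc1) (sq_nonneg ‖b‖)]

theorem aux_closed_of_angle {A B : Submodule ℂ H} (hA : IsClosed (A : Set H))
    (hB : IsClosed (B : Set H)) {c : ℝ} (hc0 : 0 ≤ c) (hc1 : c < 1)
    (h : ∀ a ∈ A, ∀ b ∈ B, ‖(inner ℂ a b : ℂ)‖ ≤ c * (‖a‖ * ‖b‖)) :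
    IsClosed ((A ⊔ B : Submodule ℂ H) : Set H) := by
  have hest := aux_est hc0 hc1.le h
  -- ‖a‖ ≤ ‖a+b‖ / √(1-c)
  set δ : ℝ := 1 - c with hδ
  have hδ0 : 0 < δ := by linarith
  have key : ∀ a ∈ A, ∀ b ∈ B, ‖a‖ ≤ ‖a + b‖ / Real.sqrt δ := by
    intro a ha b hb
    rw [le_div_iff₀ (Real.sqrt_pos.mpr hδ0)]
    have h2 : (‖a‖ * Real.sqrt δ) ^ 2 ≤ ‖a + b‖ ^ 2 := by
      rw [mul_pow, Real.sq_sqrt hδ0.le]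
      calc ‖a‖ ^ 2 * δ = δ * ‖a‖ ^ 2 := by ring
        _ ≤ _ := hest a ha b hb
    have h3 := Real.sqrt_le_sqrt h2
    rwa [Real.sqrt_sq (by positivity), Real.sqrt_sq (norm_nonneg _)] at h3
  apply IsSeqClosed.isClosed
  intro u z hu huz
  choose a ha b hb hab using fun n => Submodule.mem_sup.mp (hu n)
  have hCu : CauchySeq u := huz.cauchySeq
  have hca : CauchySeq a := by
    rw [Metric.cauchySeq_iff] at hCu ⊢
    intro ε hε
    obtain ⟨N, hN⟩ := hCu (ε * Real.sqrt δ) (by positivity)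
    refine ⟨N, fun m hm n hn => ?_⟩
    have h1 : a m - a n ∈ A := A.sub_mem (ha m) (ha n)
    have h2 : b m - b n ∈ B := B.sub_mem (hb m) (hb n)
    have h3 := key _ h1 _ h2
    have h4 : (a m - a n) + (b m - b n) = u m - u n := by
      rw [← hab m, ← hab n]; abel
    rw [h4] at h3
    rw [dist_eq_norm] at *
    have h5 := hN m hm n hn
    rw [dist_eq_norm] at h5
    calc ‖a m - a n‖ ≤ ‖u m - u n‖ / Real.sqrt δ := h3
      _ < ε := by
          rw [div_lt_iff₀ (Real.sqrt_pos.mpr hδ0)]; exact h5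
  obtain ⟨x, hx⟩ := cauchySeq_tendsto_of_complete hca
  have hxA : x ∈ A := hA.mem_of_tendsto hx (Filter.Eventually.of_forall ha)
  have hbt : Filter.Tendsto b Filter.atTop (nhds (z - x)) := by
    have hbe : b = fun n => u n - a n := funext fun n => by rw [← hab n]; abel
    rw [hbe]; exact huz.sub hx
  have hyB : z - x ∈ B := hB.mem_of_tendsto hbt (Filter.Eventually.of_forall hb)
  exact Submodule.mem_sup.mpr ⟨x, hxA, z - x, hyB, by abel⟩

theorem aux_antilip {A B : Submodule ℂ H} (hA : IsClosed (A : Set H))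
    (hB : IsClosed (B : Set H)) (hAB : A ⊓ B = ⊥)
    (hS : IsClosed ((A ⊔ B : Submodule ℂ H) : Set H)) :
    ∃ C : ℝ, 1 ≤ C ∧ ∀ a ∈ A, ∀ b ∈ B, ‖a‖ ≤ C * ‖a + b‖ := by
  haveI : CompleteSpace A := hA.completeSpace_coe
  haveI : CompleteSpace B := hB.completeSpace_coe
  haveI : CompleteSpace (A ⊔ B : Submodule ℂ H) := hS.completeSpace_coe
  -- the addition map A × B → A ⊔ B
  set f₀ : (A × B) →L[ℂ] H :=
    A.subtypeL.comp (ContinuousLinearMap.fst ℂ A B) +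
    B.subtypeL.comp (ContinuousLinearMap.snd ℂ A B) with hf₀
  have hf₀app : ∀ p : A × B, f₀ p = (p.1 : H) + (p.2 : H) := fun p => rfl
  have hmem : ∀ p : A × B, f₀ p ∈ (A ⊔ B : Submodule ℂ H) := fun p =>
    Submodule.mem_sup.mpr ⟨p.1, p.1.2, p.2, p.2.2, rfl⟩
  set f : (A × B) →L[ℂ] (A ⊔ B : Submodule ℂ H) := f₀.codRestrict _ hmem with hf
  have hinj : f.ker = ⊥ := by
    rw [LinearMap.ker_eq_bot']
    intro p hp
    have h1 : (p.1 : H) + (p.2 : H) = 0 := congrArg Subtype.val hp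
    have h2 : (p.1 : H) ∈ A ⊓ B := ⟨p.1.2, by
      rw [eq_neg_of_add_eq_zero_left h1]
      exact B.neg_mem p.2.2⟩
    rw [hAB, Submodule.mem_bot] at h2
    have h3 : (p.2 : H) = 0 := by rw [h2] at h1; simpa using h1
    ext <;> simp [h2, h3]
  have hsurj : f.range = ⊤ := by
    rw [LinearMap.range_eq_top]
    rintro ⟨z, hz⟩
    obtain ⟨a, haA, b, hbB, hab⟩ := Submodule.mem_sup.mp hz
    exact ⟨(⟨a, haA⟩, ⟨b, hbB⟩), Subtype.ext (by exact hab)⟩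
  set e := ContinuousLinearEquiv.ofBijective f hinj hsurj with he
  refine ⟨max ‖(e.symm : (A ⊔ B : Submodule ℂ H) →L[ℂ] (A × B))‖ 1, le_max_right _ _, ?_⟩
  intro a ha b hb
  set p : A × B := (⟨a, ha⟩, ⟨b, hb⟩)
  have h1 : e.symm ⟨a + b, Submodule.mem_sup.mpr ⟨a, ha, b, hb, rfl⟩⟩ = p := by
    have : f p = ⟨a + b, _⟩ := Subtype.ext rfl
    rw [← this]
    exact e.symm_apply_apply p
  have h2 := (e.symm : (A ⊔ B : Submodule ℂ H) →L[ℂ] (A × B)).le_opNorm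
    ⟨a + b, Submodule.mem_sup.mpr ⟨a, ha, b, hb, rfl⟩⟩
  rw [show ((e.symm : (A ⊔ B : Submodule ℂ H) →L[ℂ] (A × B)))
      ⟨a + b, Submodule.mem_sup.mpr ⟨a, ha, b, hb, rfl⟩⟩ = p from h1] at h2
  have h3 : ‖a‖ ≤ ‖p‖ := by
    rw [Prod.norm_def]
    exact le_max_left _ _ |>.trans_eq' rfl
  have h4 : ‖(⟨a + b, Submodule.mem_sup.mpr ⟨a, ha, b, hb, rfl⟩⟩ :
      (A ⊔ B : Submodule ℂ H))‖ = ‖a + b‖ := rfl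
  calc ‖a‖ ≤ ‖p‖ := h3
    _ ≤ ‖(e.symm : (A ⊔ B : Submodule ℂ H) →L[ℂ] (A × B))‖ * ‖a + b‖ := by
        rw [← h4]; exact h2
    _ ≤ _ := by
        apply mul_le_mul_of_nonneg_right (le_max_left _ _) (norm_nonneg _)

theorem friedrichsAngle_lt_one_iff_closed (M N : Submodule ℂ H)
    (hM : IsClosed (M : Set H)) (hN : IsClosed (N : Set H)) :
    friedrichsAngle M N < 1 ↔ IsClosed ((M ⊔ N : Submodule ℂ H) : Set H) := by
  set L := M ⊓ N with hL
  set K := Lᗮ with hK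
  set A := M ⊓ K with hA
  set B := N ⊓ K with hB
  set S := {r : ℝ | ∃ x ∈ A, ∃ y ∈ B, ‖x‖ = 1 ∧ ‖y‖ = 1 ∧ r = ‖(inner ℂ x y : ℂ)‖} with hSdef
  have hfa : friedrichsAngle M N = sSup S := rfl
  have hLc : IsClosed (L : Set H) := by
    rw [hL, Submodule.coe_inf]; exact hM.inter hN
  have hKc : IsClosed (K : Set H) := L.isClosed_orthogonal
  have hAc : IsClosed (A : Set H) := by
    rw [hA, Submodule.coe_inf]; exact hM.inter hKc
  have hBc : IsClosed (B : Set H) := by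
    rw [hB, Submodule.coe_inf]; exact hN.inter hKc
  haveI : CompleteSpace L := hLc.completeSpace_coe
  have hMLA : M ≤ L ⊔ A := by
    intro m hm
    refine Submodule.mem_sup.mpr ⟨orthogonalProjection L m, (orthogonalProjection L m).2,
      m - orthogonalProjection L m, ⟨?_, sub_starProjection_mem_orthogonal m⟩, by abel⟩
    exact M.sub_mem hm (inf_le_left (b := N) (orthogonalProjection L m).2)
  have hNLB : N ≤ L ⊔ B := by
    intro n hn
    refine Submodule.mem_sup.mpr ⟨orthogonalProjection L n, (orthogonalProjection L n).2,
      n - orthogonalProjection L n, ⟨?_, sub_starProjection_mem_orthogonal n⟩, by abel⟩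
    exact N.sub_mem hn (inf_le_right (a := M) (orthogonalProjection L n).2)
  have hABK : A ⊔ B ≤ K := sup_le inf_le_right inf_le_right
  have hsup : M ⊔ N = L ⊔ (A ⊔ B) := by
    apply le_antisymm
    · exact sup_le (hMLA.trans (sup_le_sup_left le_sup_left _))
        (hNLB.trans (sup_le_sup_left le_sup_right _))
    · exact sup_le (inf_le_left.trans le_sup_left)
        (sup_le (inf_le_left.trans le_sup_left) (inf_le_left.trans le_sup_right))
  have hLK : ∀ x ∈ L, x ∈ K → x = 0 := by
    intro x hxL hxK
    have := (Submodule.mem_orthogonal L x).mp hxK x hxL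
    exact inner_self_eq_zero.mp this
  have hABbot : A ⊓ B = ⊥ := by
    rw [eq_bot_iff]
    intro x hx
    exact Submodule.mem_bot ℂ |>.mpr (hLK x ⟨hx.1.1, hx.2.1⟩ hx.1.2)
  have hAeq : A ⊔ B = (M ⊔ N) ⊓ K := by
    apply le_antisymm
    · exact le_inf (sup_le (inf_le_left.trans le_sup_left) (inf_le_left.trans le_sup_right)) hABK
    · rintro z ⟨hz1, hz2⟩
      obtain ⟨m, hm, n, hn, hmn⟩ := Submodule.mem_sup.mp hz1
      obtain ⟨l₁, hl₁, a, haA, ha⟩ := Submodule.mem_sup.mp (hMLA hm)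
      obtain ⟨l₂, hl₂, b, hbB, hb⟩ := Submodule.mem_sup.mp (hNLB hn)
      have hw : a + b ∈ A ⊔ B := Submodule.mem_sup.mpr ⟨a, haA, b, hbB, rfl⟩
      have hzw : z - (a + b) = l₁ + l₂ := by
        rw [← hmn, ← ha, ← hb]; abel
      have h0 : z - (a + b) = 0 := by
        apply hLK _ (hzw ▸ L.add_mem hl₁ hl₂)
        exact K.sub_mem hz2 (hABK hw)
      have : z = a + b := by rw [sub_eq_zero] at h0; exact h0
      rw [this]; exact hw
  rw [hfa]
  have hbdd : BddAbove S := by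
    refine ⟨1, fun r hr => ?_⟩
    obtain ⟨x, hx, y, hy, hnx, hny, hr⟩ := hr
    rw [hr]
    calc ‖(inner ℂ x y : ℂ)‖ ≤ ‖x‖ * ‖y‖ := norm_inner_le_norm x y
      _ = 1 := by rw [hnx, hny, mul_one]
  have hS0 : ∀ r ∈ S, (0:ℝ) ≤ r := by
    rintro r ⟨x, hx, y, hy, hnx, hny, hr⟩
    rw [hr]; exact norm_nonneg _
  constructor
  · intro hc
    have hc0 : 0 ≤ sSup S := Real.sSup_nonneg hS0
    have hineq : ∀ a ∈ A, ∀ b ∈ B, ‖(inner ℂ a b : ℂ)‖ ≤ sSup S * (‖a‖ * ‖b‖) := by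
      intro a ha b hb
      rcases eq_or_ne a 0 with rfl | ha0
      · simp [inner_zero_left]
      rcases eq_or_ne b 0 with rfl | hb0
      · simp [inner_zero_right]
      have hna : (0:ℝ) < ‖a‖ := norm_pos_iff.mpr ha0
      have hnb : (0:ℝ) < ‖b‖ := norm_pos_iff.mpr hb0
      set x : H := ((‖a‖ : ℂ))⁻¹ • a with hxdef
      set y : H := ((‖b‖ : ℂ))⁻¹ • b with hydef
      have hxA : x ∈ A := A.smul_mem _ ha
      have hyB : y ∈ B := B.smul_mem _ hb
      have hnx : ‖x‖ = 1 := by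
        rw [hxdef, norm_smul, norm_inv, Complex.norm_real, Real.norm_eq_abs, abs_norm,
          inv_mul_cancel₀ hna.ne']
      have hny : ‖y‖ = 1 := by
        rw [hydef, norm_smul, norm_inv, Complex.norm_real, Real.norm_eq_abs, abs_norm,
          inv_mul_cancel₀ hnb.ne']
      have hmemS : ‖(inner ℂ x y : ℂ)‖ ∈ S := ⟨x, hxA, y, hyB, hnx, hny, rfl⟩
      have hle : ‖(inner ℂ x y : ℂ)‖ ≤ sSup S := le_csSup hbdd hmemS
      have hxy : ‖(inner ℂ x y : ℂ)‖ = ‖a‖⁻¹ * (‖b‖⁻¹ * ‖(inner ℂ a b : ℂ)‖) := by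
        rw [hxdef, hydef, inner_smul_left, inner_smul_right, norm_mul, norm_mul,
          RCLike.norm_conj, norm_inv, norm_inv, Complex.norm_real, Real.norm_eq_abs, abs_norm,
          Complex.norm_real, Real.norm_eq_abs, abs_norm]
      rw [hxy] at hle
      calc ‖(inner ℂ a b : ℂ)‖ = (‖a‖ * ‖b‖) * (‖a‖⁻¹ * (‖b‖⁻¹ * ‖(inner ℂ a b : ℂ)‖)) := by
            field_simp
        _ ≤ (‖a‖ * ‖b‖) * sSup S := by
            apply mul_le_mul_of_nonneg_left hle (by positivity)
        _ = sSup S * (‖a‖ * ‖b‖) := by ring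
    have hABclosed : IsClosed ((A ⊔ B : Submodule ℂ H) : Set H) :=
      aux_closed_of_angle hAc hBc hc0 hc hineq
    rw [hsup]
    apply aux_closed_of_angle hLc hABclosed (le_refl (0:ℝ)) one_pos
    intro l hl w hw
    have : (inner ℂ l w : ℂ) = 0 := (Submodule.mem_orthogonal L w).mp (hABK hw) l hl
    rw [this, norm_zero, zero_mul]
  · intro hclosed
    have hABclosed : IsClosed ((A ⊔ B : Submodule ℂ H) : Set H) := by
      rw [hAeq, Submodule.coe_inf]
      exact hclosed.inter hKc
    obtain ⟨C, hC1, hC⟩ := aux_antilip hAc hBc hABbot hABclosed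
    have hC0 : (0:ℝ) < C := lt_of_lt_of_le one_pos hC1
    have hfinal : sSup S ≤ 1 - 1 / (2 * C ^ 2) := by
      have haux : (1:ℝ) / (2 * C ^ 2) ≤ 1 / 2 := by
        rw [div_le_div_iff₀ (by positivity) (by norm_num)]
        nlinarith
      apply Real.sSup_le _ (by linarith)
      rintro r ⟨x, hx, y, hy, hnx, hny, hr⟩
      rcases eq_or_ne (inner ℂ x y : ℂ) 0 with h0 | h0
      · rw [hr, h0, norm_zero]; nlinarith
      set lam : ℂ := (‖(inner ℂ x y : ℂ)‖ : ℂ) / (inner ℂ x y : ℂ) with hlam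
      have hlam_mul : lam * (inner ℂ x y : ℂ) = (‖(inner ℂ x y : ℂ)‖ : ℂ) :=
        div_mul_cancel₀ _ h0
      have hlam_norm : ‖lam‖ = 1 := by
        rw [hlam, norm_div, Complex.norm_real, Real.norm_eq_abs, abs_norm,
          div_self (norm_ne_zero_iff.mpr h0)]
      set y' : H := lam • y with hy'
      have hy'B : y' ∈ B := B.smul_mem _ hy
      have hny' : ‖y'‖ = 1 := by rw [hy', norm_smul, hlam_norm, hny, mul_one]
      have hinner : (inner ℂ x y' : ℂ) = (r : ℂ) := by
        rw [hy', inner_smul_right, hlam_mul, hr]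
      have hre : RCLike.re (inner ℂ x y' : ℂ) = r := by rw [hinner]; simp
      have hsub : ‖x - y'‖ ^ 2 = 2 - 2 * r := by
        rw [norm_sub_sq (𝕜 := ℂ), hre, hnx, hny']; ring
      have hkey : ‖x‖ ≤ C * ‖x + -y'‖ := hC x hx (-y') (B.neg_mem hy'B)
      rw [hnx, ← sub_eq_add_neg] at hkey
      have h1 : 1 ≤ C ^ 2 * ‖x - y'‖ ^ 2 := by nlinarith [norm_nonneg (x - y')]
      rw [hsub] at h1
      have hr0 : 0 ≤ r := hS0 r ⟨x, hx, y, hy, hnx, hny, hr⟩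
      have h2 : 1 / (2 * C ^ 2) ≤ 1 - r := by
        rw [div_le_iff₀ (by positivity)]
        nlinarith
      linarith
    have : 0 < 1 / (2 * C ^ 2) := by positivity
    linarith
end

section
/- Let H be a Hilbert space and M, N closed subspaces. Then H = M⊥ + N⊥ if and only if the Dixmier angle cosine c₀(M, N) < 1, where c₀(M,N) = sup{|⟨x,y⟩| : x ∈ M, y ∈ N, ‖x‖=‖y‖=1}. -/
open ContinuousLinearMap Submodule

noncomputable def dixmierAngle {H : Type*} [NormedAddCommGroup H] [InnerProductSpace ℂ H]
    (M N : Submodule ℂ H) : ℝ :=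
  sSup {r : ℝ | ∃ x ∈ M, ∃ y ∈ N, ‖x‖ = 1 ∧ ‖y‖ = 1 ∧ r = ‖(inner ℂ x y : ℂ)‖}

variable {H : Type*} [NormedAddCommGroup H] [InnerProductSpace ℂ H] [CompleteSpace H]

private lemma dixmier_bddAbove (M N : Submodule ℂ H) :
    BddAbove {r : ℝ | ∃ x ∈ M, ∃ y ∈ N, ‖x‖ = 1 ∧ ‖y‖ = 1 ∧ r = ‖(inner ℂ x y : ℂ)‖} := by
  refine ⟨1, ?_⟩
  rintro r ⟨x, hx, y, hy, hx1, hy1, rfl⟩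
  calc ‖(inner ℂ x y : ℂ)‖ ≤ ‖x‖ * ‖y‖ := norm_inner_le_norm x y
    _ = 1 := by rw [hx1, hy1, one_mul]

private lemma dixmier_nonneg (M N : Submodule ℂ H) : 0 ≤ dixmierAngle M N :=
  Real.sSup_nonneg (by rintro r ⟨x, _, y, _, _, _, rfl⟩; exact norm_nonneg _)

private lemma norm_inner_le_dixmier (M N : Submodule ℂ H) {x y : H}
    (hx : x ∈ M) (hy : y ∈ N) :
    ‖(inner ℂ x y : ℂ)‖ ≤ dixmierAngle M N * (‖x‖ * ‖y‖) := by
  rcases eq_or_ne x 0 with rfl | hx0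
  · simp [dixmier_nonneg M N]
  rcases eq_or_ne y 0 with rfl | hy0
  · simp [dixmier_nonneg M N]
  have hxn : ‖x‖ ≠ 0 := norm_ne_zero_iff.2 hx0
  have hyn : ‖y‖ ≠ 0 := norm_ne_zero_iff.2 hy0
  set x' : H := ((‖x‖⁻¹ : ℝ) : ℂ) • x with hx'
  set y' : H := ((‖y‖⁻¹ : ℝ) : ℂ) • y with hy'
  have hx'1 : ‖x'‖ = 1 := by
    rw [hx', norm_smul, Complex.norm_real, Real.norm_eq_abs,
      abs_of_nonneg (inv_nonneg.2 (norm_nonneg x)), inv_mul_cancel₀ hxn]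
  have hy'1 : ‖y'‖ = 1 := by
    rw [hy', norm_smul, Complex.norm_real, Real.norm_eq_abs,
      abs_of_nonneg (inv_nonneg.2 (norm_nonneg y)), inv_mul_cancel₀ hyn]
  have hmem : (‖x‖⁻¹ * ‖y‖⁻¹ * ‖(inner ℂ x y : ℂ)‖) ∈
      {r : ℝ | ∃ x ∈ M, ∃ y ∈ N, ‖x‖ = 1 ∧ ‖y‖ = 1 ∧ r = ‖(inner ℂ x y : ℂ)‖} := by
    refine ⟨x', M.smul_mem _ hx, y', N.smul_mem _ hy, hx'1, hy'1, ?_⟩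
    rw [hx', hy', inner_smul_left, inner_smul_right]
    simp only [norm_mul, RCLike.norm_conj, Complex.norm_real, Real.norm_eq_abs,
      abs_of_nonneg (inv_nonneg.2 (norm_nonneg x)),
      abs_of_nonneg (inv_nonneg.2 (norm_nonneg y))]
    ring
  have hle : ‖x‖⁻¹ * ‖y‖⁻¹ * ‖(inner ℂ x y : ℂ)‖ ≤ dixmierAngle M N :=
    le_csSup (dixmier_bddAbove M N) hmem
  have key : ‖(inner ℂ x y : ℂ)‖ = (‖x‖ * ‖y‖) * (‖x‖⁻¹ * ‖y‖⁻¹ * ‖(inner ℂ x y : ℂ)‖) := by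
    field_simp
  rw [key]
  calc (‖x‖ * ‖y‖) * (‖x‖⁻¹ * ‖y‖⁻¹ * ‖(inner ℂ x y : ℂ)‖)
      ≤ (‖x‖ * ‖y‖) * dixmierAngle M N :=
        mul_le_mul_of_nonneg_left hle (mul_nonneg (norm_nonneg x) (norm_nonneg y))
    _ = dixmierAngle M N * (‖x‖ * ‖y‖) := by ring

theorem sup_orthogonal_eq_top_iff_dixmierAngle_lt_one (M N : Submodule ℂ H)
    (hM : IsClosed (M : Set H)) (hN : IsClosed (N : Set H)) :
    Mᗮ ⊔ Nᗮ = (⊤ : Submodule ℂ H) ↔ dixmierAngle M N < 1 := by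
  haveI : CompleteSpace M := hM.completeSpace_coe
  haveI : CompleteSpace N := hN.completeSpace_coe
  constructor
  · -- forward direction via open mapping theorem
    intro htop
    haveI : CompleteSpace Mᗮ := (Submodule.isClosed_orthogonal M).completeSpace_coe
    haveI : CompleteSpace Nᗮ := (Submodule.isClosed_orthogonal N).completeSpace_coe
    have hsurj : Function.Surjective ⇑((Mᗮ.subtypeL).coprod (Nᗮ.subtypeL)) := by
      intro z
      have hz : z ∈ Mᗮ ⊔ Nᗮ := htop ▸ Submodule.mem_top
      obtain ⟨u, hu, v, hv, huv⟩ := Submodule.mem_sup.1 hz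
      exact ⟨(⟨u, hu⟩, ⟨v, hv⟩), huv⟩
    obtain ⟨C, hC, hCall⟩ := ContinuousLinearMap.exists_preimage_norm_le _ hsurj
    set D : ℝ := max C 1 with hD
    have hD1 : (1 : ℝ) ≤ D := le_max_right _ _
    have hD0 : (0 : ℝ) < D := lt_of_lt_of_le one_pos hD1
    -- real-part bound for unit vectors
    have hre : ∀ x ∈ M, ∀ y ∈ N, ‖x‖ = 1 → ‖y‖ = 1 →
        Complex.re (inner ℂ x y : ℂ) ≤ 1 - 1 / (2 * D ^ 2) := by
      intro x hx y hy hx1 hy1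
      obtain ⟨⟨u, v⟩, heq, hnorm⟩ := hCall x
      have heq' : (u : H) + (v : H) = x := heq
      have hvnorm : ‖(v : H)‖ ≤ D := by
        have h1 : ‖(v : H)‖ ≤ ‖((u, v) : Mᗮ × Nᗮ)‖ := by
          rw [Prod.norm_def]; exact le_max_right _ _
        have : ‖((u, v) : Mᗮ × Nᗮ)‖ ≤ C * ‖x‖ := hnorm
        rw [hx1, mul_one] at this
        exact le_trans h1 (le_trans this (le_max_left _ _))
      have hxu : (inner ℂ x (u : H) : ℂ) = 0 :=
        (Submodule.mem_orthogonal M (u : H)).1 u.2 x hx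
      have hyv : (inner ℂ y (v : H) : ℂ) = 0 :=
        (Submodule.mem_orthogonal N (v : H)).1 v.2 y hy
      have hxv : (inner ℂ x (v : H) : ℂ) = 1 := by
        have h1 : (inner ℂ x x : ℂ) = 1 := by
          rw [inner_self_eq_norm_sq_to_K (𝕜 := ℂ) (E := H) x, hx1]; norm_num
        have h2 : (inner ℂ x x : ℂ) = inner ℂ x (u : H) + inner ℂ x (v : H) := by
          rw [← inner_add_right, heq']
        rw [h1, hxu, zero_add] at h2
        exact h2.symm
      have hxyv : (inner ℂ (x - y) (v : H) : ℂ) = 1 := by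
        rw [inner_sub_left, hxv, hyv, sub_zero]
      have hdist : 1 ≤ D * ‖x - y‖ := by
        have h1 : (1 : ℝ) = ‖(inner ℂ (x - y) (v : H) : ℂ)‖ := by rw [hxyv]; simp
        calc (1 : ℝ) = ‖(inner ℂ (x - y) (v : H) : ℂ)‖ := h1
          _ ≤ ‖x - y‖ * ‖(v : H)‖ := norm_inner_le_norm _ _
          _ ≤ ‖x - y‖ * D := mul_le_mul_of_nonneg_left hvnorm (norm_nonneg _)
          _ = D * ‖x - y‖ := mul_comm _ _
      have hsq : ‖x - y‖ ^ 2 = 2 - 2 * Complex.re (inner ℂ x y : ℂ) := by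
        have h := @norm_sub_sq ℂ H _ _ _ x y
        rw [hx1, hy1] at h
        simp only [one_pow, RCLike.re_to_complex] at h
        linarith
      have h2 : 1 ≤ D ^ 2 * ‖x - y‖ ^ 2 := by nlinarith [sq_nonneg (D * ‖x - y‖ - 1)]
      rw [hsq] at h2
      have h5 : 1 / (2 * D ^ 2) ≤ 1 - Complex.re (inner ℂ x y : ℂ) := by
        rw [div_le_iff₀ (by positivity : (0:ℝ) < 2 * D ^ 2)]
        calc (1:ℝ) ≤ D ^ 2 * (2 - 2 * Complex.re (inner ℂ x y : ℂ)) := h2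
          _ = (1 - Complex.re (inner ℂ x y : ℂ)) * (2 * D ^ 2) := by ring
      linarith
    -- norm bound for unit vectors, via phase rotation
    have hbound : ∀ x ∈ M, ∀ y ∈ N, ‖x‖ = 1 → ‖y‖ = 1 →
        ‖(inner ℂ x y : ℂ)‖ ≤ 1 - 1 / (2 * D ^ 2) := by
      intro x hx y hy hx1 hy1
      rcases eq_or_ne (inner ℂ x y : ℂ) 0 with h0 | h0
      · rw [h0, norm_zero]
        have : 1 / (2 * D ^ 2) ≤ 1 / 2 := by
          apply div_le_div_of_nonneg_left one_pos.le (by norm_num)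
          nlinarith
        linarith
      · set a : ℂ := inner ℂ x y with ha
        set c : ℂ := (‖a‖ : ℂ) / a with hc
        have hcnorm : ‖c‖ = 1 := by
          rw [hc, norm_div, Complex.norm_real, Real.norm_eq_abs, abs_of_nonneg (norm_nonneg a),
            div_self (norm_ne_zero_iff.2 h0)]
        have hy' : c • y ∈ N := N.smul_mem _ hy
        have hy'1 : ‖c • y‖ = 1 := by rw [norm_smul, hcnorm, one_mul, hy1]
        have hinner : (inner ℂ x (c • y) : ℂ) = (‖a‖ : ℂ) := by
          rw [inner_smul_right, ← ha, hc, div_mul_cancel₀ _ h0]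
        have := hre x hx (c • y) hy' hx1 hy'1
        rw [hinner] at this
        simpa using this
    have hlt : dixmierAngle M N ≤ 1 - 1 / (2 * D ^ 2) := by
      apply Real.sSup_le
      · rintro r ⟨x, hx, y, hy, hx1, hy1, rfl⟩
        exact hbound x hx y hy hx1 hy1
      · have : 1 / (2 * D ^ 2) ≤ 1 / 2 := by
          apply div_le_div_of_nonneg_left one_pos.le (by norm_num)
          nlinarith
        linarith
    have : 1 - 1 / (2 * D ^ 2) < 1 := by
      have : 0 < 1 / (2 * D ^ 2) := by positivity
      linarith
    linarith
  · -- reverse direction via geometric series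
    intro hangle
    set T : H →L[ℂ] H :=
      (M.subtypeL ∘L orthogonalProjection M) ∘L (N.subtypeL ∘L orthogonalProjection N) with hT
    have hTapp : ∀ z : H, T z = (orthogonalProjection M ((orthogonalProjection N z : H)) : H) := by
      intro z; simp [hT]
    have hTnorm : ‖T‖ ≤ dixmierAngle M N := by
      apply ContinuousLinearMap.opNorm_le_bound _ (dixmier_nonneg M N)
      intro z
      set w : H := (orthogonalProjection N z : H) with hw
      set p : H := (orthogonalProjection M w : H) with hp
      have hTz : T z = p := hTapp z
      have hpM : p ∈ M := (orthogonalProjection M w).2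
      have hwN : w ∈ N := (orthogonalProjection N z).2
      have hwz : ‖w‖ ≤ ‖z‖ := by
        have h1 : ‖orthogonalProjection N z‖ ≤ ‖orthogonalProjection N‖ * ‖z‖ :=
          (orthogonalProjection N).le_opNorm z
        have h2 : ‖orthogonalProjection N‖ * ‖z‖ ≤ 1 * ‖z‖ :=
          mul_le_mul_of_nonneg_right (orthogonalProjection_norm_le N) (norm_nonneg z)
        calc ‖w‖ = ‖orthogonalProjection N z‖ := rfl
          _ ≤ 1 * ‖z‖ := le_trans h1 h2
          _ = ‖z‖ := one_mul _
      have hkey : (inner ℂ p w : ℂ) = (‖p‖ ^ 2 : ℝ) := by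
        have hsplit : (inner ℂ p w : ℂ) = inner ℂ p p + inner ℂ p (w - p) := by
          rw [← inner_add_right]; congr 1; abel
        have hzero : (inner ℂ p (w - p) : ℂ) = 0 :=
          (Submodule.mem_orthogonal M (w - p)).1 (sub_starProjection_mem_orthogonal (K := M) w) p hpM
        rw [hsplit, hzero, add_zero, inner_self_eq_norm_sq_to_K (𝕜 := ℂ) (E := H) p]
        norm_num
      have hineq : ‖p‖ ^ 2 ≤ dixmierAngle M N * (‖p‖ * ‖z‖) := by
        have h1 : ‖p‖ ^ 2 = ‖(inner ℂ p w : ℂ)‖ := by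
          rw [hkey]; rw [Complex.norm_real, Real.norm_eq_abs, abs_of_nonneg (sq_nonneg _)]
        rw [h1]
        calc ‖(inner ℂ p w : ℂ)‖ ≤ dixmierAngle M N * (‖p‖ * ‖w‖) :=
              norm_inner_le_dixmier M N hpM hwN
          _ ≤ dixmierAngle M N * (‖p‖ * ‖z‖) := by
              apply mul_le_mul_of_nonneg_left _ (dixmier_nonneg M N)
              exact mul_le_mul_of_nonneg_left hwz (norm_nonneg p)
      rw [hTz]
      rcases eq_or_lt_of_le (norm_nonneg p) with h | h
      · rw [← h]; exact mul_nonneg (dixmier_nonneg M N) (norm_nonneg z)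
      · have := (mul_le_mul_iff_left₀ h).1 (by nlinarith : ‖p‖ * ‖p‖ ≤ (dixmierAngle M N * ‖z‖) * ‖p‖)
        linarith
    have hT1 : ‖T‖ < 1 := lt_of_le_of_lt hTnorm hangle
    set u : (H →L[ℂ] H)ˣ := Units.oneSub T hT1 with hu
    have huval : (u : H →L[ℂ] H) = 1 - T := rfl
    rw [eq_top_iff]
    intro z _
    set w : H := ((u⁻¹ : (H →L[ℂ] H)ˣ) : H →L[ℂ] H) z with hwdef
    have hwz : w - T w = z := by
      have h1 : ((u : H →L[ℂ] H) * ((u⁻¹ : (H →L[ℂ] H)ˣ) : H →L[ℂ] H)) z = (1 : H →L[ℂ] H) z := by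
        rw [u.mul_inv]
      rw [ContinuousLinearMap.mul_apply, ContinuousLinearMap.one_apply] at h1
      rw [huval, ContinuousLinearMap.sub_apply, ContinuousLinearMap.one_apply] at h1
      exact h1
    set q : H := (orthogonalProjection N w : H) with hq
    have h1 : q - (orthogonalProjection M q : H) ∈ Mᗮ := sub_starProjection_mem_orthogonal (K := M) q
    have h2 : w - q ∈ Nᗮ := sub_starProjection_mem_orthogonal (K := N) w
    apply Submodule.mem_sup.2
    refine ⟨q - (orthogonalProjection M q : H), h1, w - q, h2, ?_⟩
    have hTw : T w = (orthogonalProjection M q : H) := hTapp w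
    rw [← hwz, ← hTw]
    abel
end

section
/- Let A : H1 → H2 and B : H3 → H2 be bounded operators between Hilbert spaces. If R(B) ⊆ R(A) then there exists a unique bounded operator D : H3 → H1 with B = A D and R(D) ⊆ N(A)⊥; moreover N(D) = N(B) and ‖D‖² = inf{λ ∈ ℝ : B B* ≤ λ A A*}. -/
open ContinuousLinearMap Submodule Filter Topology

local notation "⟪" x ", " y "⟫" => @inner ℂ _ _ x y

set_option maxHeartbeats 1000000 in
theorem douglas_reduced_solution {H₁ H₂ H₃ : Type*}
    [NormedAddCommGroup H₁] [InnerProductSpace ℂ H₁] [CompleteSpace H₁]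
    [NormedAddCommGroup H₂] [InnerProductSpace ℂ H₂] [CompleteSpace H₂]
    [NormedAddCommGroup H₃] [InnerProductSpace ℂ H₃] [CompleteSpace H₃]
    (A : H₁ →L[ℂ] H₂) (B : H₃ →L[ℂ] H₂)
    (h : LinearMap.range (B : H₃ →ₗ[ℂ] H₂) ≤ LinearMap.range (A : H₁ →ₗ[ℂ] H₂)) :
    ∃ D : H₃ →L[ℂ] H₁,
      (B = A ∘L D ∧ LinearMap.range (D : H₃ →ₗ[ℂ] H₁) ≤ (LinearMap.ker (A : H₁ →ₗ[ℂ] H₂))ᗮ) ∧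
      (∀ D' : H₃ →L[ℂ] H₁,
        (B = A ∘L D' ∧ LinearMap.range (D' : H₃ →ₗ[ℂ] H₁) ≤ (LinearMap.ker (A : H₁ →ₗ[ℂ] H₂))ᗮ) → D' = D) ∧
      LinearMap.ker (D : H₃ →ₗ[ℂ] H₁) = LinearMap.ker (B : H₃ →ₗ[ℂ] H₂) ∧
      ‖D‖ ^ 2 =
        sInf {c : ℝ |
          ((c : ℂ) • (A ∘L adjoint A) - B ∘L adjoint B).IsPositive} := by
  classical
  set K : Submodule ℂ H₁ := LinearMap.ker (A : H₁ →ₗ[ℂ] H₂) with hKdef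
  have hKc : IsClosed (K : Set H₁) := isClosed_ker A
  haveI : CompleteSpace K := hKc.completeSpace_coe
  have hKorth : Kᗮᗮ = K := Submodule.orthogonal_orthogonal K
  set P : H₁ →L[ℂ] H₁ := Kᗮ.subtypeL ∘L orthogonalProjection Kᗮ with hPdef
  have hPmem : ∀ w, P w ∈ Kᗮ := fun w => (orthogonalProjection Kᗮ w).2
  have hPsub : ∀ w, w - P w ∈ K := by
    intro w
    have h1 := Submodule.sub_starProjection_mem_orthogonal (K := Kᗮ) w
    rwa [hKorth] at h1
  have hPK : ∀ v ∈ K, P v = 0 := by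
    intro v hv
    have : v ∈ Kᗮᗮ := hKorth.symm ▸ hv
    simp [hPdef, Submodule.orthogonalProjectionOnto_apply_of_mem_orthogonal this]
  have hPid : ∀ v ∈ Kᗮ, P v = v := by
    intro v hv
    simpa [hPdef] using congrArg Subtype.val
      (orthogonalProjection_mem_subspace_eq_self (K := Kᗮ) ⟨v, hv⟩)
  have hAP : ∀ w, A (P w) = A w := by
    intro w
    have h1 : A (w - P w) = 0 := hPsub w
    rw [map_sub, sub_eq_zero] at h1
    exact h1.symm
  have hex : ∀ x : H₃, ∃ w, A w = B x := fun x =>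
    LinearMap.mem_range.mp (h (LinearMap.mem_range_self (B : H₃ →ₗ[ℂ] H₂) x))
  choose w hw using hex
  set f : H₃ → H₁ := fun x => P (w x) with hfdef
  have key : ∀ x u, A u = B x → f x = P u := by
    intro x u hu
    have h1 : w x - u ∈ K := by
      have : A (w x - u) = 0 := by rw [map_sub, hw, hu, sub_self]
      exact this
    have h2 := hPK _ h1
    rw [map_sub, sub_eq_zero] at h2
    exact h2
  have hfA : ∀ x, A (f x) = B x := fun x => (hAP (w x)).trans (hw x)
  have hfmem : ∀ x, f x ∈ Kᗮ := fun x => hPmem _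
  have key2 : ∀ x u, u ∈ Kᗮ → A u = B x → f x = u := fun x u hm hu =>
    (key x u hu).trans (hPid u hm)
  set g : H₃ →ₗ[ℂ] H₁ :=
    { toFun := f
      map_add' := fun x y => key2 (x + y) (f x + f y)
        (add_mem (hfmem x) (hfmem y))
        (by rw [map_add, hfA, hfA, map_add])
      map_smul' := fun c x => key2 (c • x) (c • f x)
        (smul_mem _ _ (hfmem x))
        (by rw [map_smul, hfA, map_smul]) } with hgdef
  have hgseq : ∀ (u : ℕ → H₃) (x y), Tendsto u atTop (𝓝 x) →
      Tendsto (g ∘ u) atTop (𝓝 y) → y = g x := by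
    intro u x y hx hy
    have hyK : y ∈ Kᗮ :=
      (K.isClosed_orthogonal).mem_of_tendsto hy
        (Filter.Eventually.of_forall fun n => hfmem (u n))
    have hyA : A y = B x := by
      have h1 : Tendsto (fun n => A (g (u n))) atTop (𝓝 (A y)) :=
        (A.continuous.tendsto y).comp hy
      have h2 : (fun n => A (g (u n))) = fun n => B (u n) :=
        funext fun n => hfA (u n)
      have h3 : Tendsto (fun n => B (u n)) atTop (𝓝 (B x)) :=
        (B.continuous.tendsto x).comp hx
      rw [h2] at h1
      exact tendsto_nhds_unique h1 h3
    exact (key2 x y hyK hyA).symm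
  set D : H₃ →L[ℂ] H₁ := ContinuousLinearMap.ofSeqClosedGraph hgseq with hDdef
  have hDapp : ∀ x, D x = f x := fun x => rfl
  clear_value D
  clear hDdef hgseq
  have hDmem : ∀ x, D x ∈ Kᗮ := fun x => hDapp x ▸ hfmem x
  have hB : B = A ∘L D := by
    ext x
    rw [ContinuousLinearMap.comp_apply, hDapp]
    exact (hfA x).symm
  have hrange : LinearMap.range (D : H₃ →ₗ[ℂ] H₁) ≤ Kᗮ := by
    rintro _ ⟨x, rfl⟩
    exact hDmem x
  have huniq : ∀ D' : H₃ →L[ℂ] H₁,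
      (B = A ∘L D' ∧ LinearMap.range (D' : H₃ →ₗ[ℂ] H₁) ≤ Kᗮ) → D' = D := by
    rintro D' ⟨hB', hr'⟩
    ext x
    have h1 : A (D' x) = B x := by rw [hB']; rfl
    rw [hDapp]
    exact (key2 x (D' x) (hr' (LinearMap.mem_range_self _ x)) h1).symm
  have hker : LinearMap.ker (D : H₃ →ₗ[ℂ] H₁) = LinearMap.ker (B : H₃ →ₗ[ℂ] H₂) := by
    ext x
    simp only [LinearMap.mem_ker, ContinuousLinearMap.coe_coe]
    constructor
    · intro hx
      rw [hB]
      simp [hx]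
    · intro hx
      have h1 : D x ∈ K := by
        have : A (D x) = 0 := by rw [hDapp, hfA, hx]
        exact this
      have h2 := (Submodule.mem_orthogonal K (D x)).mp (hDmem x) (D x) h1
      exact inner_self_eq_zero.mp h2
  refine ⟨D, ⟨hB, hrange⟩, huniq, hker, ?_⟩
  -- the norm identity
  set S : Set ℝ :=
    {c : ℝ | ((c : ℂ) • (A ∘L adjoint A) - B ∘L adjoint B).IsPositive} with hSdef
  have hadjB : ∀ y, adjoint B y = adjoint D (adjoint A y) := by
    intro y
    rw [hB, adjoint_comp]
    rfl
  have hcalc : ∀ (c : ℝ) (y : H₂),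
      ⟪((c : ℂ) • (A ∘L adjoint A) - B ∘L adjoint B) y, y⟫ =
        ((c * ‖adjoint A y‖ ^ 2 - ‖adjoint B y‖ ^ 2 : ℝ) : ℂ) := by
    intro c y
    have e1 : ⟪A (adjoint A y), y⟫ = ((‖adjoint A y‖ ^ 2 : ℝ) : ℂ) := by
      rw [← adjoint_inner_right, inner_self_eq_norm_sq_to_K]
      norm_num
    have e2 : ⟪B (adjoint B y), y⟫ = ((‖adjoint B y‖ ^ 2 : ℝ) : ℂ) := by
      rw [← adjoint_inner_right, inner_self_eq_norm_sq_to_K]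
      norm_num
    simp only [ContinuousLinearMap.sub_apply, ContinuousLinearMap.smul_apply,
      ContinuousLinearMap.comp_apply, inner_sub_left, inner_smul_left, e1, e2,
      Complex.conj_ofReal]
    push_cast
    ring
  have hSiff : ∀ c : ℝ, c ∈ S ↔
      ∀ y, ‖adjoint B y‖ ^ 2 ≤ c * ‖adjoint A y‖ ^ 2 := by
    intro c
    rw [hSdef, Set.mem_setOf_eq, ContinuousLinearMap.isPositive_iff_complex]
    constructor
    · intro hp y
      have h2 := (hp y).2
      rw [hcalc] at h2
      simp only [RCLike.re_to_complex, Complex.ofReal_re] at h2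
      linarith
    · intro hp y
      rw [hcalc]
      refine ⟨by simp only [RCLike.re_to_complex, Complex.ofReal_re], ?_⟩
      simp only [RCLike.re_to_complex, Complex.ofReal_re]
      linarith [hp y]
  have hnormD : ‖adjoint D‖ = ‖D‖ :=
    ContinuousLinearMap.adjoint.norm_map D
  have hmemS : ‖D‖ ^ 2 ∈ S := by
    rw [hSiff]
    intro y
    have h1 : ‖adjoint B y‖ ≤ ‖D‖ * ‖adjoint A y‖ := by
      rw [hadjB]
      calc ‖adjoint D (adjoint A y)‖ ≤ ‖adjoint D‖ * ‖adjoint A y‖ :=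
            (adjoint D).le_opNorm _
        _ = ‖D‖ * ‖adjoint A y‖ := by rw [hnormD]
    calc ‖adjoint B y‖ ^ 2 ≤ (‖D‖ * ‖adjoint A y‖) ^ 2 :=
          pow_le_pow_left₀ (norm_nonneg _) h1 2
      _ = ‖D‖ ^ 2 * ‖adjoint A y‖ ^ 2 := by ring
  by_cases hA : A = 0
  · -- degenerate case : `A = 0`, so `B = 0`, `D = 0`, `S = univ`
    have hKtop : K = ⊤ := by
      rw [hKdef, hA]
      exact LinearMap.ker_eq_top.mpr rfl
    have hD0 : D = 0 := by
      ext x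
      have h1 : D x ∈ Kᗮ := hDmem x
      rw [hKtop, Submodule.top_orthogonal_eq_bot] at h1
      simpa using h1
    have hB0 : B = 0 := by
      rw [hB, hA]
      ext x
      simp
    have hA' : ∀ z, A z = 0 := fun z => by simp [hA]
    have hB' : ∀ z, B z = 0 := fun z => by simp [hB0]
    have hadjA0 : ∀ y, adjoint A y = 0 := by
      intro y
      have h1 : ⟪adjoint A y, adjoint A y⟫ = 0 := by
        rw [adjoint_inner_left, hA', inner_zero_right]
      exact inner_self_eq_zero.mp h1
    have hadjB0 : ∀ y, adjoint B y = 0 := by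
      intro y
      have h1 : ⟪adjoint B y, adjoint B y⟫ = 0 := by
        rw [adjoint_inner_left, hB', inner_zero_right]
      exact inner_self_eq_zero.mp h1
    have hSuniv : S = Set.univ := by
      ext c
      simp only [Set.mem_univ, iff_true]
      rw [hSiff]
      intro y
      rw [hadjA0 y, hadjB0 y]
      simp
    have hnb : ¬BddBelow (Set.univ : Set ℝ) := by
      rintro ⟨b, hb⟩
      have := hb (Set.mem_univ (b - 1))
      linarith
    have hs0 : sInf S = 0 := by
      rw [hSuniv]
      rw [csInf_of_not_bddBelow hnb, Real.sInf_empty]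
    simp [hs0, hD0]
  · -- main case
    have hKeq : K = (LinearMap.range (adjoint A : H₂ →ₗ[ℂ] H₁))ᗮ := by
      ext u
      rw [Submodule.mem_orthogonal]
      constructor
      · intro hu v hv
        obtain ⟨y, rfl⟩ := LinearMap.mem_range.mp hv
        rw [ContinuousLinearMap.coe_coe, adjoint_inner_left]
        have hu' : A u = 0 := hu
        rw [hu', inner_zero_right]
      · intro hu
        have h1 : ∀ y : H₂, ⟪y, A u⟫ = 0 := fun y => by
          rw [← adjoint_inner_left]
          exact hu _ (LinearMap.mem_range_self _ y)
        have h2 : A u = 0 := inner_self_eq_zero.mp (h1 (A u))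
        exact h2
    have hlb : ∀ c ∈ S, ‖D‖ ^ 2 ≤ c := by
      intro c hc
      rw [hSiff] at hc
      have hy0 : ∃ y : H₂, adjoint A y ≠ 0 := by
        by_contra hcon
        push_neg at hcon
        apply hA
        have hadj0 : adjoint A = 0 := ContinuousLinearMap.ext fun y => hcon y
        calc A = adjoint (adjoint A) := (adjoint_adjoint A).symm
          _ = adjoint 0 := by rw [hadj0]
          _ = 0 := by
              rw [← adjoint_adjoint (0 : H₁ →L[ℂ] H₂)]
              congr 1
              ext y
              simp
      obtain ⟨y₀, hy₀⟩ := hy0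
      have hc0 : 0 ≤ c := by
        have h1 := hc y₀
        have h2 : 0 < ‖adjoint A y₀‖ ^ 2 :=
          pow_pos (norm_pos_iff.mpr hy₀) 2
        nlinarith [sq_nonneg ‖adjoint B y₀‖]
      set Cset : Set H₁ := {u | ‖adjoint D u‖ ≤ Real.sqrt c * ‖u‖} with hCdef
      have hCclosed : IsClosed Cset :=
        isClosed_le ((adjoint D).continuous.norm)
          (continuous_const.mul continuous_norm)
      have hCrange : ∀ y : H₂, adjoint A y ∈ Cset := by
        intro y
        have h1 : ‖adjoint D (adjoint A y)‖ = ‖adjoint B y‖ := by rw [← hadjB]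
        rw [hCdef, Set.mem_setOf_eq, h1]
        have h2 : ‖adjoint B y‖ = Real.sqrt (‖adjoint B y‖ ^ 2) :=
          (Real.sqrt_sq (norm_nonneg _)).symm
        rw [h2]
        calc Real.sqrt (‖adjoint B y‖ ^ 2) ≤
              Real.sqrt (c * ‖adjoint A y‖ ^ 2) := Real.sqrt_le_sqrt (hc y)
          _ = Real.sqrt c * ‖adjoint A y‖ := by
              rw [Real.sqrt_mul hc0, Real.sqrt_sq (norm_nonneg _)]
      have hDadjK : ∀ u ∈ K, adjoint D u = 0 := by
        intro u hu
        have h1 : ⟪adjoint D u, adjoint D u⟫ = 0 := by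
          rw [adjoint_inner_left]
          exact (Submodule.mem_orthogonal K _).mp (hDmem (adjoint D u)) u hu
        exact inner_self_eq_zero.mp h1
      have hbound : ∀ u : H₁, ‖adjoint D u‖ ≤ Real.sqrt c * ‖u‖ := by
        intro u
        have h1 : adjoint D u = adjoint D (P u) := by
          have h2 := hDadjK (u - P u) (hPsub u)
          rw [map_sub, sub_eq_zero] at h2
          exact h2
        have h3 : P u ∈ Cset := by
          have h4 : P u ∈ Kᗮ := hPmem u
          rw [hKeq, Submodule.orthogonal_orthogonal_eq_closure] at h4
          have h5 : (P u : H₁) ∈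
              closure ((LinearMap.range (adjoint A : H₂ →ₗ[ℂ] H₁) : Submodule ℂ H₁) : Set H₁) := by
            rw [← Submodule.topologicalClosure_coe]
            exact h4
          refine closure_minimal ?_ hCclosed h5
          rintro _ ⟨y, rfl⟩
          exact hCrange y
        have h6 : ‖P u‖ ≤ ‖u‖ := by
          have h7 : ‖P u‖ = ‖(orthogonalProjection Kᗮ u : Kᗮ)‖ := rfl
          rw [h7]
          calc ‖(orthogonalProjection Kᗮ u : Kᗮ)‖ ≤
                ‖(orthogonalProjection Kᗮ : H₁ →L[ℂ] Kᗮ)‖ * ‖u‖ :=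
              (orthogonalProjection Kᗮ).le_opNorm u
            _ ≤ 1 * ‖u‖ := by
                have h8 := orthogonalProjection_norm_le Kᗮ
                nlinarith [norm_nonneg u]
            _ = ‖u‖ := one_mul _
        calc ‖adjoint D u‖ = ‖adjoint D (P u)‖ := by rw [h1]
          _ ≤ Real.sqrt c * ‖P u‖ := h3
          _ ≤ Real.sqrt c * ‖u‖ := by
              have h9 := Real.sqrt_nonneg c
              nlinarith
      have h8 : ‖adjoint D‖ ≤ Real.sqrt c :=
        (adjoint D).opNorm_le_bound (Real.sqrt_nonneg c) hbound
      have h9 : ‖D‖ ≤ Real.sqrt c := by rw [← hnormD]; exact h8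
      calc ‖D‖ ^ 2 ≤ Real.sqrt c ^ 2 := pow_le_pow_left₀ (norm_nonneg _) h9 2
        _ = c := Real.sq_sqrt hc0
    exact le_antisymm (le_csInf ⟨_, hmemS⟩ hlb) (csInf_le ⟨‖D‖ ^ 2, hlb⟩ hmemS)
end

section
/- Let S ⊆ H1, T ⊆ H2 be closed subspaces and A : H1 → H2 a bounded operator. Then A is (S,T)-complementable if and only if H1 = S⊥ + A⁻¹(T) and H2 = T⊥ + (A*)⁻¹(S). -/
set_option linter.unusedSectionVars false

open ContinuousLinearMap Submodule
open scoped InnerProductSpace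

variable {H₁ H₂ : Type*} [NormedAddCommGroup H₁] [InnerProductSpace ℂ H₁] [CompleteSpace H₁]
  [NormedAddCommGroup H₂] [InnerProductSpace ℂ H₂] [CompleteSpace H₂]

section Aux

variable {H : Type*} [NormedAddCommGroup H] [InnerProductSpace ℂ H] [CompleteSpace H]

lemma aux_idem_star {P : H →L[ℂ] H} (h : IsIdempotentElem P) :
    IsIdempotentElem (adjoint P) := by
  have : adjoint P * adjoint P = adjoint (P * P) := (adjoint_comp P P).symm
  rw [IsIdempotentElem, this, h.eq]

omit [CompleteSpace H] in
lemma aux_range_eq_ker {P : H →L[ℂ] H} (h : IsIdempotentElem P) :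
    LinearMap.range (P : H →ₗ[ℂ] H) = LinearMap.ker ((1 - P : H →L[ℂ] H) : H →ₗ[ℂ] H) := by
  ext x
  constructor
  · rintro ⟨y, rfl⟩
    have : P (P y) = P y := congrFun (congrArg DFunLike.coe h.eq) y
    simp [LinearMap.mem_ker, this]
  · intro hx
    have : x - P x = 0 := hx
    exact ⟨x, by rw [eq_comm, ← sub_eq_zero]; simpa using this⟩

lemma aux_isClosed_range {P : H →L[ℂ] H} (h : IsIdempotentElem P) :
    IsClosed ((LinearMap.range (P : H →ₗ[ℂ] H) : Submodule ℂ H) : Set H) := by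
  rw [aux_range_eq_ker h]
  exact ContinuousLinearMap.isClosed_ker (1 - P)

lemma aux_orth_range_adjoint (P : H →L[ℂ] H) :
    (LinearMap.range (adjoint P : H →ₗ[ℂ] H))ᗮ = LinearMap.ker (P : H →ₗ[ℂ] H) := by
  ext x
  simp only [Submodule.mem_orthogonal, LinearMap.mem_range, LinearMap.mem_ker,
    forall_exists_index]
  constructor
  · intro hx
    have h1 : ∀ y : H, ⟪y, P x⟫_ℂ = 0 := by
      intro y
      have := hx (adjoint P y) y rfl
      rwa [ContinuousLinearMap.adjoint_inner_left] at this
    have := h1 (P x)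
    exact inner_self_eq_zero.mp this
  · rintro hx u y rfl
    simp only [ContinuousLinearMap.coe_coe] at hx ⊢
    rw [ContinuousLinearMap.adjoint_inner_left, hx, inner_zero_right]

lemma aux_range_adjoint {P : H →L[ℂ] H} (h : IsIdempotentElem P) :
    LinearMap.range (adjoint P : H →ₗ[ℂ] H) = (LinearMap.ker (P : H →ₗ[ℂ] H))ᗮ := by
  rw [← aux_orth_range_adjoint P]
  have hc : IsClosed ((LinearMap.range (adjoint P : H →ₗ[ℂ] H) : Submodule ℂ H) : Set H) :=
    aux_isClosed_range (aux_idem_star h)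
  haveI : CompleteSpace (LinearMap.range (adjoint P : H →ₗ[ℂ] H)) := hc.completeSpace_coe
  exact (Submodule.orthogonal_orthogonal _).symm

/-- Key construction: if `Uᗮ ⊔ V = ⊤` with `V` closed, there is a continuous idempotent
with kernel `Uᗮ` and range inside `V`. -/
lemma aux_exists_idem (U V : Submodule ℂ H) [CompleteSpace U] (hV : IsClosed (V : Set H))
    (hsup : Uᗮ ⊔ V = ⊤) :
    ∃ P : H →L[ℂ] H, IsIdempotentElem P ∧ LinearMap.ker (P : H →ₗ[ℂ] H) = Uᗮ ∧
      LinearMap.range (P : H →ₗ[ℂ] H) ≤ V := by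
  set W : Submodule ℂ H := Uᗮ ⊓ V with hW
  have hWclosed : IsClosed (W : Set H) := U.isClosed_orthogonal.inter hV
  haveI : CompleteSpace W := hWclosed.completeSpace_coe
  set N : Submodule ℂ H := Wᗮ ⊓ V with hN
  have hNclosed : IsClosed (N : Set H) := W.isClosed_orthogonal.inter hV
  have hVle : V ≤ W ⊔ N := by
    intro x hx
    obtain ⟨y, hy, z, hz, hxyz⟩ := W.exists_add_mem_mem_orthogonal x
    have hzV : z ∈ V := by
      have : z = x - y := by rw [hxyz]; abel
      rw [this]
      exact V.sub_mem hx hy.2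
    rw [hxyz]
    exact Submodule.add_mem_sup hy (Submodule.mem_inf.mpr ⟨hz, hzV⟩)
  have hcompl : IsCompl Uᗮ N := by
    constructor
    · rw [disjoint_iff_inf_le]
      intro x hx
      have hxW : x ∈ W := Submodule.mem_inf.mpr ⟨hx.1, hx.2.2⟩
      have hxWo : x ∈ Wᗮ := hx.2.1
      have : (inner ℂ x x : ℂ) = 0 := hxWo x hxW
      simpa using inner_self_eq_zero.mp this
    · rw [codisjoint_iff_le_sup]
      calc (⊤ : Submodule ℂ H) = Uᗮ ⊔ V := hsup.symm
        _ ≤ Uᗮ ⊔ (W ⊔ N) := sup_le_sup_left hVle _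
        _ = (Uᗮ ⊔ W) ⊔ N := (sup_assoc _ _ _).symm
        _ = Uᗮ ⊔ N := by rw [sup_eq_left.mpr (inf_le_left : W ≤ Uᗮ)]
  have hcompl' : IsCompl N Uᗮ := hcompl.symm
  set π : H →L[ℂ] N := N.linearProjOfClosedCompl Uᗮ hcompl' hNclosed U.isClosed_orthogonal
  refine ⟨N.subtypeL ∘L π, ?_, ?_, ?_⟩
  · -- idempotent
    have hπ : ∀ n : N, π (n : H) = n := fun n =>
      Submodule.linearProjOfIsCompl_apply_left hcompl' n
    ext x
    simp only [ContinuousLinearMap.mul_def, ContinuousLinearMap.comp_apply,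
      Submodule.subtypeL_apply]
    rw [hπ]
  · -- kernel
    ext x
    simp only [LinearMap.mem_ker, ContinuousLinearMap.coe_coe, ContinuousLinearMap.comp_apply,
      Submodule.subtypeL_apply, ZeroMemClass.coe_eq_zero]
    constructor
    · intro hx
      have : x ∈ LinearMap.ker (N.projectionOnto Uᗮ hcompl') := hx
      rwa [Submodule.linearProjOfIsCompl_ker] at this
    · intro hx
      exact Submodule.linearProjOfIsCompl_apply_right hcompl' ⟨x, hx⟩
  · rintro x ⟨y, rfl⟩
    exact (inf_le_right : N ≤ V) (π y).2

end Aux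

theorem complementable_iff_sup_preimage
    (S : Submodule ℂ H₁) [CompleteSpace S] (T : Submodule ℂ H₂) [CompleteSpace T]
    (A : H₁ →L[ℂ] H₂) :
    (∃ (P : H₁ →L[ℂ] H₁) (Q : H₂ →L[ℂ] H₂),
      IsIdempotentElem P ∧ IsIdempotentElem Q ∧
      LinearMap.range (adjoint P : H₁ →ₗ[ℂ] H₁) = S ∧ LinearMap.range (Q : H₂ →ₗ[ℂ] H₂) = T ∧
      LinearMap.range (A ∘L P : H₁ →ₗ[ℂ] H₂) ≤ T ∧ LinearMap.range (adjoint (Q ∘L A) : H₂ →ₗ[ℂ] H₁) ≤ S) ↔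
    (Sᗮ ⊔ Submodule.comap A.toLinearMap T = ⊤ ∧
      Tᗮ ⊔ Submodule.comap (adjoint A).toLinearMap S = ⊤) := by
  constructor
  · rintro ⟨P, Q, hP, hQ, hPS, hQT, hAP, hQA⟩
    constructor
    · rw [eq_top_iff]
      intro x _
      have hker : Sᗮ = LinearMap.ker (P : H₁ →ₗ[ℂ] H₁) := by rw [← hPS, aux_orth_range_adjoint]
      have h1 : x - P x ∈ Sᗮ := by
        rw [hker]
        have : P (P x) = P x := congrFun (congrArg DFunLike.coe hP.eq) x
        simp [LinearMap.mem_ker, this]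
      have h2 : P x ∈ Submodule.comap A.toLinearMap T := hAP ⟨x, rfl⟩
      have := Submodule.add_mem_sup h1 h2
      simpa using this
    · rw [eq_top_iff]
      intro x _
      have hker : Tᗮ = LinearMap.ker (adjoint Q : H₂ →ₗ[ℂ] H₂) := by
        rw [← hQT]
        have := aux_orth_range_adjoint (adjoint Q)
        rwa [adjoint_adjoint] at this
      have h1 : x - adjoint Q x ∈ Tᗮ := by
        rw [hker]
        have : adjoint Q (adjoint Q x) = adjoint Q x :=
          congrFun (congrArg DFunLike.coe (aux_idem_star hQ).eq) x
        simp [LinearMap.mem_ker, this]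
      have h2 : adjoint Q x ∈ Submodule.comap (adjoint A).toLinearMap S := by
        have : adjoint A (adjoint Q x) ∈ S := by
          have := hQA ⟨x, rfl⟩
          rwa [adjoint_comp, ContinuousLinearMap.coe_coe, ContinuousLinearMap.comp_apply] at this
        exact this
      have := Submodule.add_mem_sup h1 h2
      simpa using this
  · rintro ⟨h1, h2⟩
    have hTclosed : IsClosed (T : Set H₂) :=
      (completeSpace_coe_iff_isComplete.mp ‹_›).isClosed
    have hSclosed : IsClosed (S : Set H₁) :=
      (completeSpace_coe_iff_isComplete.mp ‹_›).isClosed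
    obtain ⟨P, hP, hPker, hPrange⟩ := aux_exists_idem S (Submodule.comap A.toLinearMap T)
      (hTclosed.preimage A.continuous) h1
    obtain ⟨R, hR, hRker, hRrange⟩ := aux_exists_idem T
      (Submodule.comap (adjoint A).toLinearMap S)
      (hSclosed.preimage (adjoint A).continuous) h2
    refine ⟨P, adjoint R, hP, aux_idem_star hR, ?_, ?_, ?_, ?_⟩
    · rw [aux_range_adjoint hP, hPker, Submodule.orthogonal_orthogonal]
    · have := aux_range_adjoint hR
      rw [this, hRker, Submodule.orthogonal_orthogonal]
    · rintro y ⟨x, rfl⟩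
      exact hPrange ⟨x, rfl⟩
    · rintro y ⟨x, rfl⟩
      have heq : adjoint (adjoint R ∘L A) = adjoint A ∘L R := by
        rw [adjoint_comp, adjoint_adjoint]
      rw [heq]
      exact hRrange ⟨x, rfl⟩
end

section
/- Let A, B : H1 → H2 be bounded operators with R(A*) ⊆ R(|B|^{1/2}). If {y_n} is a sequence in H1, d ∈ H2 and M > 0 satisfy A y_n → d, B y_n → 0, and ⟨|B| y_n, y_n⟩ ≤ M for all n, then d = 0. -/
open ContinuousLinearMap Submodule

variable {H₁ H₂ : Type*} [NormedAddCommGroup H₁] [InnerProductSpace ℂ H₁] [CompleteSpace H₁]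
  [NormedAddCommGroup H₂] [InnerProductSpace ℂ H₂] [CompleteSpace H₂]

theorem lemma_limit_zero (A B : H₁ →L[ℂ] H₂) (Ch : H₁ →L[ℂ] H₁)
    (hCh : Ch.IsPositive) (hCh4 : Ch ∘L Ch ∘L Ch ∘L Ch = adjoint B ∘L B)
    (hrange : LinearMap.range (adjoint A : H₂ →ₗ[ℂ] H₁) ≤ LinearMap.range (Ch : H₁ →ₗ[ℂ] H₁))
    (y : ℕ → H₁) (d : H₂) (M : ℝ) (hM : 0 < M)
    (hA : Filter.Tendsto (fun n => A (y n)) Filter.atTop (nhds d))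
    (hB : Filter.Tendsto (fun n => B (y n)) Filter.atTop (nhds 0))
    (hbound : ∀ n, (inner ℂ ((Ch ∘L Ch) (y n)) (y n) : ℂ).re ≤ M) :
    d = 0 := by
  have hsa : adjoint Ch = Ch := ContinuousLinearMap.isSelfAdjoint_iff'.mp hCh.isSelfAdjoint
  have hmove : ∀ a b : H₁, (inner ℂ (Ch a) b : ℂ) = inner ℂ a (Ch b) := fun a b => by
    conv_lhs => rw [← hsa]
    exact ContinuousLinearMap.adjoint_inner_left Ch b a
  set x : ℕ → H₁ := fun n => Ch (y n) with hx
  -- bound on ‖x n‖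
  have hxb : ∀ n, ‖x n‖ ≤ Real.sqrt M := by
    intro n
    have h1 : (inner ℂ ((Ch ∘L Ch) (y n)) (y n) : ℂ) = inner ℂ (x n) (x n) := by
      simpa using hmove (Ch (y n)) (y n)
    have h2 : ‖x n‖ ^ 2 ≤ M := by
      have := hbound n
      rw [h1, inner_self_eq_norm_sq_to_K] at this
      simpa [← Complex.ofReal_pow] using this
    calc ‖x n‖ = Real.sqrt (‖x n‖ ^ 2) := (Real.sqrt_sq (norm_nonneg _)).symm
      _ ≤ Real.sqrt M := Real.sqrt_le_sqrt h2
  -- ‖Ch (x n)‖ = ‖B (y n)‖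
  have hnorm : ∀ z : H₁, ‖Ch (Ch z)‖ = ‖B z‖ := by
    intro z
    have h1 : (inner ℂ (Ch (Ch z)) (Ch (Ch z)) : ℂ) = inner ℂ ((Ch ∘L Ch ∘L Ch ∘L Ch) z) z := by
      simp only [ContinuousLinearMap.comp_apply]
      rw [hmove (Ch (Ch (Ch z))) z, hmove (Ch (Ch z)) (Ch z)]
    have h2 : (inner ℂ (Ch (Ch z)) (Ch (Ch z)) : ℂ) = inner ℂ (B z) (B z) := by
      rw [h1, hCh4]
      simp only [ContinuousLinearMap.comp_apply]
      exact ContinuousLinearMap.adjoint_inner_left B z (B z)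
    have h3 : ‖Ch (Ch z)‖ ^ 2 = ‖B z‖ ^ 2 := by
      rw [inner_self_eq_norm_sq_to_K, inner_self_eq_norm_sq_to_K] at h2
      exact_mod_cast h2
    calc ‖Ch (Ch z)‖ = Real.sqrt (‖Ch (Ch z)‖ ^ 2) := (Real.sqrt_sq (norm_nonneg _)).symm
      _ = Real.sqrt (‖B z‖ ^ 2) := by rw [h3]
      _ = ‖B z‖ := Real.sqrt_sq (norm_nonneg _)
  have hChx : Filter.Tendsto (fun n => Ch (x n)) Filter.atTop (nhds 0) := by
    rw [tendsto_zero_iff_norm_tendsto_zero]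
    have he : (fun n => ‖Ch (x n)‖) = fun n => ‖B (y n)‖ := by
      funext n; exact hnorm (y n)
    rw [he]
    exact tendsto_zero_iff_norm_tendsto_zero.mp hB
  -- adjoint A d = Ch w
  obtain ⟨w, hw⟩ := hrange ⟨d, rfl⟩
  -- the key sequence of inner ℂ products
  have hf : Filter.Tendsto (fun n => (inner ℂ w (x n) : ℂ)) Filter.atTop
      (nhds ((‖d‖ : ℂ) ^ 2)) := by
    have he : (fun n => (inner ℂ w (x n) : ℂ)) = fun n => (inner ℂ d (A (y n)) : ℂ) := by
      funext n
      calc (inner ℂ w (x n) : ℂ) = inner ℂ (Ch w) (y n) := (hmove w (y n)).symm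
        _ = inner ℂ (adjoint A d) (y n) := congrArg (fun v => inner ℂ v (y n)) hw
        _ = inner ℂ d (A (y n)) := ContinuousLinearMap.adjoint_inner_left A (y n) d
    have hdd : (inner ℂ d d : ℂ) = (‖d‖ : ℂ) ^ 2 := by
      rw [inner_self_eq_norm_sq_to_K]; norm_num
    rw [he, ← hdd]
    exact Filter.Tendsto.inner tendsto_const_nhds hA
  -- orthogonal projection setup
  set K : Submodule ℂ H₁ := (LinearMap.range (Ch : H₁ →ₗ[ℂ] H₁)).topologicalClosure with hK
  haveI : CompleteSpace K :=
    (Submodule.isClosed_topologicalClosure (LinearMap.range (Ch : H₁ →ₗ[ℂ] H₁))).completeSpace_coe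
  set w₁ : H₁ := (orthogonalProjection K w : H₁) with hw₁
  have hv : w - w₁ ∈ Kᗮ := K.sub_starProjection_mem_orthogonal w
  have hxK : ∀ n, x n ∈ K := fun n =>
    Submodule.le_topologicalClosure _ ⟨y n, rfl⟩
  have hsplit : ∀ n, (inner ℂ w (x n) : ℂ) = inner ℂ w₁ (x n) := by
    intro n
    have h0 : (inner ℂ (w - w₁) (x n) : ℂ) = 0 :=
      (Submodule.mem_orthogonal' K _).mp hv (x n) (hxK n)
    have : (inner ℂ w (x n) : ℂ) = inner ℂ w₁ (x n) + inner ℂ (w - w₁) (x n) := by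
      rw [← inner_add_left]
      congr 1
      abel
    rw [this, h0, add_zero]
  -- main estimate
  have hd2 : ‖d‖ ^ 2 ≤ 0 := by
    apply le_of_forall_pos_le_add
    intro ε hε
    rw [zero_add]
    set δ : ℝ := ε / (2 * (Real.sqrt M + 1)) with hδ
    have hsM : (0 : ℝ) ≤ Real.sqrt M := Real.sqrt_nonneg M
    have hδpos : 0 < δ := by positivity
    -- approximate w₁ by an element of the range
    have hw₁K : w₁ ∈ K := SetLike.coe_mem _
    rw [hK, ← SetLike.mem_coe, Submodule.topologicalClosure_coe,
      Metric.mem_closure_iff] at hw₁K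
    obtain ⟨u, huK, hud⟩ := hw₁K δ hδpos
    obtain ⟨u', hu'⟩ := huK
    -- eventually the inner ℂ products are small
    have htz : Filter.Tendsto (fun n => ‖(inner ℂ u' (Ch (x n)) : ℂ)‖) Filter.atTop (nhds 0) := by
      have h := Filter.Tendsto.inner (𝕜 := ℂ) (tendsto_const_nhds (x := u')) hChx
      simp only [inner_zero_right] at h
      simpa using h.norm
    have hev : ∀ᶠ n in Filter.atTop, ‖(inner ℂ u' (Ch (x n)) : ℂ)‖ < δ :=
      (htz.eventually (eventually_lt_nhds hδpos))
    have hbig : ∀ᶠ n in Filter.atTop, ‖(inner ℂ w (x n) : ℂ)‖ ≤ ε := by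
      filter_upwards [hev] with n hn
      have h1 : (inner ℂ w₁ (x n) : ℂ) = inner ℂ u' (Ch (x n)) + inner ℂ (w₁ - u) (x n) := by
        rw [← hmove u', (show Ch u' = u from hu'), ← inner_add_left]
        congr 1
        abel
      have h2 : ‖(inner ℂ (w₁ - u) (x n) : ℂ)‖ ≤ δ * Real.sqrt M := by
        calc ‖(inner ℂ (w₁ - u) (x n) : ℂ)‖ ≤ ‖w₁ - u‖ * ‖x n‖ := norm_inner_le_norm _ _
          _ ≤ δ * Real.sqrt M := by
              apply mul_le_mul _ (hxb n) (norm_nonneg _) (le_of_lt hδpos)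
              rw [← dist_eq_norm]
              exact le_of_lt hud
      calc ‖(inner ℂ w (x n) : ℂ)‖ = ‖(inner ℂ w₁ (x n) : ℂ)‖ := by rw [hsplit n]
        _ ≤ ‖(inner ℂ u' (Ch (x n)) : ℂ)‖ + ‖(inner ℂ (w₁ - u) (x n) : ℂ)‖ := by
            rw [h1]; exact norm_add_le _ _
        _ ≤ δ + δ * Real.sqrt M := add_le_add (le_of_lt hn) h2
        _ = δ * (Real.sqrt M + 1) := by ring
        _ = ε / 2 := by
            rw [hδ]; field_simp
        _ ≤ ε := by linarith
    have := le_of_tendsto hf.norm hbig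
    simpa using this
  have hd : ‖d‖ = 0 := by nlinarith [norm_nonneg d, sq_nonneg ‖d‖]
  exact norm_eq_zero.mp hd
end
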